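/- arXiv:2603.29720 — 3 statements merged into one kernel-verified Lean document; each statement's English description precedes it below -/
import Mathlib

section
/- Let T and S be continuous surjective self-maps of compact metric spaces X and Y respectively, let μ be a (T×S)-invariant Borel probability measure on X×Y with marginals μ_X on X and μ_Y on Y. Then for all continuous partitions of unity Φ on X and Ψ on Y, max{ h̃_{μ_X}(T,Φ), h̃_{μ_Y}(S,Ψ) } ≤ h̃_μ(T×S, Φ⊗Ψ) ≤ h̃_{μ_X}(T,Φ) + h̃_{μ_Y}(S,Ψ), where Φ⊗Ψ := { (x,y) ↦ φ(x)ψ(y) : φ ∈ Φ, ψ ∈ Ψ } is a partition of unity on X×Y. -/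
open MeasureTheory Filter Set

/-! ### Partitions of unity -/

/-- A finite partition of unity on `X`: a finite family of functions `X → [0,1]`
summing to `1` everywhere. -/
structure PartUnity (X : Type*) where
  n : ℕ
  f : Fin n → X → ℝ
  nonneg : ∀ i x, 0 ≤ f i x
  le_one : ∀ i x, f i x ≤ 1
  sum_one : ∀ x, ∑ i, f i x = 1

namespace PartUnity

variable {X Y : Type*}

/-- A continuous partition of unity. -/
def Cont [TopologicalSpace X] (Φ : PartUnity X) : Prop := ∀ i, Continuous (Φ.f i)

/-- A measurable partition of unity. -/
def Meas [MeasurableSpace X] (Φ : PartUnity X) : Prop := ∀ i, Measurable (Φ.f i)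

/-- A positive partition of unity. -/
def Pos (Φ : PartUnity X) : Prop := ∀ i x, 0 < Φ.f i x

/-- The join `Φ ∨ Ψ = {φ·ψ : φ ∈ Φ, ψ ∈ Ψ}` of two partitions of unity. -/
def join (Φ Ψ : PartUnity X) : PartUnity X where
  n := Φ.n * Ψ.n
  f k x := Φ.f (finProdFinEquiv.symm k).1 x * Ψ.f (finProdFinEquiv.symm k).2 x
  nonneg k x := mul_nonneg (Φ.nonneg _ x) (Ψ.nonneg _ x)
  le_one k x := mul_le_one₀ (Φ.le_one _ x) (Ψ.nonneg _ x) (Ψ.le_one _ x)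
  sum_one x := by
    rw [← Equiv.sum_comp (finProdFinEquiv : Fin Φ.n × Fin Ψ.n ≃ Fin (Φ.n * Ψ.n))
      (fun k => Φ.f (finProdFinEquiv.symm k).1 x * Ψ.f (finProdFinEquiv.symm k).2 x)]
    simp only [Equiv.symm_apply_apply]
    rw [Fintype.sum_prod_type]
    dsimp only
    rw [← Finset.sum_mul_sum, Φ.sum_one x, Ψ.sum_one x, one_mul]

/-- Pull back a partition of unity by a map: `TΦ = {φ ∘ T : φ ∈ Φ}`. -/
def comp (Φ : PartUnity X) (T : Y → X) : PartUnity Y where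
  n := Φ.n
  f i y := Φ.f i (T y)
  nonneg i y := Φ.nonneg i (T y)
  le_one i y := Φ.le_one i (T y)
  sum_one y := Φ.sum_one (T y)

/-- The trivial partition of unity `{1}`. -/
def triv (X : Type*) : PartUnity X where
  n := 1
  f _ _ := 1
  nonneg _ _ := zero_le_one
  le_one _ _ := le_rfl
  sum_one _ := by simp

/-- `dyn T Φ n` is the dynamical join `Φ₀ⁿ⁻¹ = ⋁_{i=0}^{n-1} TⁱΦ`
(joined with a harmless trivial factor). -/
def dyn (T : X → X) (Φ : PartUnity X) : ℕ → PartUnity X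
  | 0 => triv X
  | n + 1 => Φ.join ((dyn T Φ n).comp T)

/-- The product partition of unity `Φ ⊗ Ψ` on `X × Y`. -/
def prod (Φ : PartUnity X) (Ψ : PartUnity Y) : PartUnity (X × Y) where
  n := Φ.n * Ψ.n
  f k p := Φ.f (finProdFinEquiv.symm k).1 p.1 * Ψ.f (finProdFinEquiv.symm k).2 p.2
  nonneg k p := mul_nonneg (Φ.nonneg _ _) (Ψ.nonneg _ _)
  le_one k p := mul_le_one₀ (Φ.le_one _ _) (Ψ.nonneg _ _) (Ψ.le_one _ _)
  sum_one p := by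
    rw [← Equiv.sum_comp (finProdFinEquiv : Fin Φ.n × Fin Ψ.n ≃ Fin (Φ.n * Ψ.n))
      (fun k => Φ.f (finProdFinEquiv.symm k).1 p.1 * Ψ.f (finProdFinEquiv.symm k).2 p.2)]
    simp only [Equiv.symm_apply_apply]
    rw [Fintype.sum_prod_type]
    dsimp only
    rw [← Finset.sum_mul_sum, Φ.sum_one p.1, Ψ.sum_one p.2, one_mul]

/-- The diameter of a partition of unity: the maximum of the diameters of the
supports of its members. -/
noncomputable def diam [PseudoMetricSpace X] (Φ : PartUnity X) : ℝ :=
  ⨆ i, Metric.diam (tsupport (Φ.f i))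

end PartUnity

/-! ### Metric entropy via partitions of unity -/

variable {X Y : Type*}

/-- The static entropy `H̃_μ(Φ) = Σ_φ ( −μ(φ) log μ(φ) + μ(φ log φ) )`. -/
noncomputable def statEnt [MeasurableSpace X] (μ : Measure X) (Φ : PartUnity X) : ℝ :=
  ∑ i, (-((∫ x, Φ.f i x ∂μ) * Real.log (∫ x, Φ.f i x ∂μ)) +
    ∫ x, Φ.f i x * Real.log (Φ.f i x) ∂μ)

/-- The conditional measure `μ_ψ`, determined by `μ_ψ(φ) = μ(φψ)/μ(ψ)`. -/
noncomputable def condMeas [MeasurableSpace X] (μ : Measure X) (ψ : X → ℝ) : Measure X :=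
  (ENNReal.ofReal (∫ x, ψ x ∂μ))⁻¹ • μ.withDensity (fun x => ENNReal.ofReal (ψ x))

/-- The conditional static entropy `H̃_μ(Φ | Ψ) = Σ_ψ μ(ψ) H̃_{μ_ψ}(Φ)`
(terms with `μ(ψ) = 0` vanish since they are multiplied by `μ(ψ) = 0`). -/
noncomputable def condStatEnt [MeasurableSpace X] (μ : Measure X) (Φ Ψ : PartUnity X) : ℝ :=
  ∑ j, (∫ x, Ψ.f j x ∂μ) * statEnt (condMeas μ (Ψ.f j)) Φ

/-- The local metric entropy `h̃_μ(T,Φ) = lim_n H̃_μ(Φ₀ⁿ⁻¹)/n`. -/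
noncomputable def locEnt [MeasurableSpace X] (T : X → X) (μ : Measure X) (Φ : PartUnity X) : ℝ :=
  Filter.atTop.limsup fun n : ℕ => statEnt μ (PartUnity.dyn T Φ n) / (n : ℝ)

/-- The local conditional metric entropy `h̃_μ(T,Φ|Ψ) = lim_n H̃_μ(Φ₀ⁿ⁻¹|Ψ₀ⁿ⁻¹)/n`. -/
noncomputable def condLocEnt [MeasurableSpace X] (T : X → X) (μ : Measure X)
    (Φ Ψ : PartUnity X) : ℝ :=
  Filter.atTop.limsup fun n : ℕ =>
    condStatEnt μ (PartUnity.dyn T Φ n) (PartUnity.dyn T Ψ n) / (n : ℝ)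

/-- The metric entropy `h̃_μ(T)`: supremum of `h̃_μ(T,Φ)` over continuous
partitions of unity. -/
noncomputable def metEnt [TopologicalSpace X] [MeasurableSpace X]
    (T : X → X) (μ : Measure X) : EReal :=
  ⨆ Φ : {Φ : PartUnity X // Φ.Cont}, ((locEnt T μ Φ.1 : ℝ) : EReal)

/-! ### Topological entropy via partitions of unity -/

/-- The topological static entropy `H̃(Φ) = Σ_φ sup φ`. -/
noncomputable def topStat (Φ : PartUnity X) : ℝ := ∑ i, ⨆ x, Φ.f i x

/-- The local topological entropy `h̃(T,Φ) = lim_n (1/n) log H̃(Φ₀ⁿ⁻¹)`. -/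
noncomputable def topLocEnt (T : X → X) (Φ : PartUnity X) : ℝ :=
  Filter.atTop.limsup fun n : ℕ => Real.log (topStat (PartUnity.dyn T Φ n)) / (n : ℝ)

/-- The topological entropy `h̃_top(T)`: supremum of `h̃(T,Φ)` over continuous
partitions of unity. -/
noncomputable def topEnt [TopologicalSpace X] (T : X → X) : EReal :=
  ⨆ Φ : {Φ : PartUnity X // Φ.Cont}, ((topLocEnt T Φ.1 : ℝ) : EReal)

/-! ### Classical Kolmogorov–Sinai entropy -/

/-- A finite Borel partition of `X` (indexed; atoms may be empty). -/
structure FinBorelPart (X : Type*) [MeasurableSpace X] where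
  n : ℕ
  A : Fin n → Set X
  meas : ∀ i, MeasurableSet (A i)
  disj : ∀ i j, i ≠ j → Disjoint (A i) (A j)
  cover : ⋃ i, A i = Set.univ

/-- Local Kolmogorov–Sinai entropy `h_μ(T,𝒜) = lim_n (1/n) Σ_{A ∈ 𝒜₀ⁿ⁻¹} −μ(A) log μ(A)`. -/
noncomputable def ksLocEnt [MeasurableSpace X] (T : X → X) (μ : Measure X)
    (P : FinBorelPart X) : ℝ :=
  Filter.atTop.limsup fun n : ℕ =>
    (∑ σ : Fin n → Fin P.n,
      Real.negMulLog (μ (⋂ i : Fin n, T^[(i : ℕ)] ⁻¹' P.A (σ i))).toReal) / (n : ℝ)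

/-- The Kolmogorov–Sinai metric entropy `h_μ(T)`. -/
noncomputable def ksEnt [MeasurableSpace X] (T : X → X) (μ : Measure X) : EReal :=
  ⨆ P : FinBorelPart X, ((ksLocEnt T μ P : ℝ) : EReal)

/-! ### Classical topological entropy via open covers -/

/-- A finite open cover of `X`. -/
structure FinOpenCover (X : Type*) [TopologicalSpace X] where
  n : ℕ
  U : Fin n → Set X
  opn : ∀ i, IsOpen (U i)
  cov : ⋃ i, U i = Set.univ

/-- The member `⋂_{i<n} T^{-i} U_{σ(i)}` of the dynamical refinement of a cover. -/
def dynSet (T : X → X) {m : ℕ} (U : Fin m → Set X) (n : ℕ) (σ : Fin n → Fin m) : Set X :=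
  ⋂ i : Fin n, T^[(i : ℕ)] ⁻¹' U (σ i)

/-- Minimal cardinality of a subfamily of `V` covering `S`. -/
noncomputable def coverNum {α : Type*} [Fintype α] (V : α → Set X) (S : Set X) : ℕ :=
  sInf {k | ∃ t : Finset α, t.card = k ∧ S ⊆ ⋃ i ∈ t, V i}

/-- The local classical topological entropy `h(T,𝒰)` of an open cover. -/
noncomputable def covLocEnt [TopologicalSpace X] (T : X → X) (C : FinOpenCover X) : ℝ :=
  Filter.atTop.limsup fun n : ℕ =>
    Real.log ((coverNum (fun σ : Fin n → Fin C.n => dynSet T C.U n σ) Set.univ : ℕ) : ℝ) / (n : ℝ)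

/-- The classical topological entropy `h_top(T)` via open covers. -/
noncomputable def topEntCov [TopologicalSpace X] (T : X → X) : EReal :=
  ⨆ C : FinOpenCover X, ((covLocEnt T C : ℝ) : EReal)

/-! ### Misiurewicz topological tail entropy -/

/-- The local conditional topological entropy `h(𝒰|𝒱)` of two open covers. -/
noncomputable def misCondLoc [TopologicalSpace X] (T : X → X) (CU CV : FinOpenCover X) : ℝ :=
  Filter.atTop.limsup fun n : ℕ =>
    Real.log (((⨆ τ : Fin n → Fin CV.n,
      coverNum (fun σ : Fin n → Fin CU.n => dynSet T CU.U n σ) (dynSet T CV.U n τ) : ℕ)) : ℝ) / (n : ℝ)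

/-- The conditional topological entropy `h(T|𝒱) = sup_𝒰 h(𝒰|𝒱)`. -/
noncomputable def misCond [TopologicalSpace X] (T : X → X) (CV : FinOpenCover X) : EReal :=
  ⨆ CU : FinOpenCover X, ((misCondLoc T CU CV : ℝ) : EReal)

/-- Misiurewicz's topological tail entropy `h*(T) = inf_𝒱 h(T|𝒱)`. -/
noncomputable def misTail [TopologicalSpace X] (T : X → X) : EReal :=
  ⨅ CV : FinOpenCover X, misCond T CV

/-! ### Topological tail entropy via partitions of unity -/

/-- `H̃(Φ|ψ) = Σ_φ sup_{supp ψ} φ`. -/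
noncomputable def condTopStatPU [TopologicalSpace X] (Φ : PartUnity X) (ψ : X → ℝ) : ℝ :=
  ∑ i, ⨆ x ∈ tsupport ψ, Φ.f i x

/-- The weight set `D(Ψ) = {a : inf ψ ≤ a_ψ ≤ sup ψ, Σ a_ψ = 1}`. -/
def weights (Ψ : PartUnity X) : Set (Fin Ψ.n → ℝ) :=
  {a | (∀ j, (⨅ x, Ψ.f j x) ≤ a j ∧ a j ≤ ⨆ x, Ψ.f j x) ∧ ∑ j, a j = 1}

/-- `H̃_n(Φ|Ψ) = sup_{a ∈ D(Ψ₀ⁿ⁻¹)} Σ_ψ a_ψ H̃(Φ₀ⁿ⁻¹|ψ)`. -/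
noncomputable def tailStat [TopologicalSpace X] (T : X → X) (Φ Ψ : PartUnity X) (n : ℕ) : ℝ :=
  sSup {r | ∃ a ∈ weights (PartUnity.dyn T Ψ n),
    r = ∑ j, a j * condTopStatPU (PartUnity.dyn T Φ n) ((PartUnity.dyn T Ψ n).f j)}

/-- The local conditional topological entropy `h̃(Φ|Ψ) = limsup_n (1/n) log H̃_n(Φ|Ψ)`. -/
noncomputable def tailLoc [TopologicalSpace X] (T : X → X) (Φ Ψ : PartUnity X) : ℝ :=
  Filter.atTop.limsup fun n : ℕ => Real.log (tailStat T Φ Ψ n) / (n : ℝ)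

/-- The conditional topological entropy `h̃(T|Ψ) = sup_Φ h̃(Φ|Ψ)` over continuous `Φ`. -/
noncomputable def condTopEntPU [TopologicalSpace X] (T : X → X) (Ψ : PartUnity X) : EReal :=
  ⨆ Φ : {Φ : PartUnity X // Φ.Cont}, ((tailLoc T Φ.1 Ψ : ℝ) : EReal)

/-- The topological tail entropy `h̃*(T) = inf_Ψ h̃(T|Ψ)` over continuous `Ψ`. -/
noncomputable def tailEntPU [TopologicalSpace X] (T : X → X) : EReal :=
  ⨅ Ψ : {Ψ : PartUnity X // Ψ.Cont}, condTopEntPU T Ψ.1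

/-! ### Pressures -/

/-- The Birkhoff sum `S_n g = Σ_{i<n} g ∘ Tⁱ`. -/
def birkhoff (T : X → X) (g : X → ℝ) (n : ℕ) (x : X) : ℝ :=
  ∑ i ∈ Finset.range n, g (T^[i] x)

/-- The static pressure `P̃(T,g,Φ,n) = Σ_{φ ∈ Φ₀ⁿ⁻¹} sup (φ e^{S_n g})`. -/
noncomputable def puPressStat (T : X → X) (g : X → ℝ) (Φ : PartUnity X) (n : ℕ) : ℝ :=
  ∑ i, ⨆ x, (PartUnity.dyn T Φ n).f i x * Real.exp (birkhoff T g n x)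

/-- The local topological pressure `P̃_top(T,g,Φ) = lim_n (1/n) log P̃(T,g,Φ,n)`. -/
noncomputable def puLocPress (T : X → X) (g : X → ℝ) (Φ : PartUnity X) : ℝ :=
  Filter.atTop.limsup fun n : ℕ => Real.log (puPressStat T g Φ n) / (n : ℝ)

/-- The topological pressure `P̃_top(T,g)` via continuous partitions of unity. -/
noncomputable def puTopPress [TopologicalSpace X] (T : X → X) (g : X → ℝ) : EReal :=
  ⨆ Φ : {Φ : PartUnity X // Φ.Cont}, ((puLocPress T g Φ.1 : ℝ) : EReal)

/-- The classical static pressure of an open cover: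
`inf { Σ_{V ∈ 𝒱} sup_V e^{S_n g} : 𝒱 a subcover of 𝒰₀ⁿ⁻¹ }`. -/
noncomputable def covPressStat [TopologicalSpace X] (T : X → X) (g : X → ℝ)
    (C : FinOpenCover X) (n : ℕ) : ℝ :=
  sInf {r | ∃ t : Finset (Fin n → Fin C.n),
    (Set.univ ⊆ ⋃ σ ∈ t, dynSet T C.U n σ) ∧
    r = ∑ σ ∈ t, ⨆ x ∈ dynSet T C.U n σ, Real.exp (birkhoff T g n x)}

/-- The local classical topological pressure of an open cover. -/
noncomputable def covLocPress [TopologicalSpace X] (T : X → X) (g : X → ℝ)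
    (C : FinOpenCover X) : ℝ :=
  Filter.atTop.limsup fun n : ℕ => Real.log (covPressStat T g C n) / (n : ℝ)

/-- The classical topological pressure `P_top(T,g)` via open covers. -/
noncomputable def topPress [TopologicalSpace X] (T : X → X) (g : X → ℝ) : EReal :=
  ⨆ C : FinOpenCover X, ((covLocPress T g C : ℝ) : EReal)

/-! ### Topological tail pressure -/

/-- `P̃_n(T,g,Φ|Ψ) = sup_{a ∈ D(Ψ₀ⁿ⁻¹)} Σ_ψ a_ψ Σ_φ sup_{supp ψ} (φ e^{S_n g})`. -/
noncomputable def tailPressStat [TopologicalSpace X] (T : X → X) (g : X → ℝ)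
    (Φ Ψ : PartUnity X) (n : ℕ) : ℝ :=
  sSup {r | ∃ a ∈ weights (PartUnity.dyn T Ψ n),
    r = ∑ j, a j * ∑ i, ⨆ x ∈ tsupport ((PartUnity.dyn T Ψ n).f j),
      (PartUnity.dyn T Φ n).f i x * Real.exp (birkhoff T g n x)}

/-- The local topological tail pressure `P̃(T,g,Φ|Ψ) = limsup_n (1/n) log P̃_n(T,g,Φ|Ψ)`. -/
noncomputable def tailLocPress [TopologicalSpace X] (T : X → X) (g : X → ℝ)
    (Φ Ψ : PartUnity X) : ℝ :=
  Filter.atTop.limsup fun n : ℕ => Real.log (tailPressStat T g Φ Ψ n) / (n : ℝ)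

/-- The conditional topological pressure `P̃(T,g|Ψ) = sup_Φ P̃(T,g,Φ|Ψ)` over continuous `Φ`. -/
noncomputable def condTopPressPU [TopologicalSpace X] (T : X → X) (g : X → ℝ)
    (Ψ : PartUnity X) : EReal :=
  ⨆ Φ : {Φ : PartUnity X // Φ.Cont}, ((tailLocPress T g Φ.1 Ψ : ℝ) : EReal)

/-- The topological tail pressure `P̃*(T,g) = inf_Ψ P̃(T,g|Ψ)` over continuous `Ψ`. -/
noncomputable def puTailPress [TopologicalSpace X] (T : X → X) (g : X → ℝ) : EReal :=
  ⨅ Ψ : {Ψ : PartUnity X // Ψ.Cont}, condTopPressPU T g Ψ.1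

/-! ### Classical topological tail pressure (Li–Chen–Cheng) -/

/-- The Bowen ball `B(x,ε,n) = {y : d(Tⁱx,Tⁱy) < ε for all 0 ≤ i < n}`. -/
def bowenBall [PseudoMetricSpace X] (T : X → X) (x : X) (ε : ℝ) (n : ℕ) : Set X :=
  {y | ∀ i < n, dist (T^[i] x) (T^[i] y) < ε}

/-- `E` is `(n,δ)`-separated: distinct points `y,z ∈ E` satisfy `d(Tⁱy,Tⁱz) > δ`
for some `0 ≤ i < n`. -/
def IsSep [PseudoMetricSpace X] (T : X → X) (n : ℕ) (δ : ℝ) (E : Finset X) : Prop :=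
  ∀ y ∈ E, ∀ z ∈ E, y ≠ z → ∃ i < n, δ < dist (T^[i] y) (T^[i] z)

/-- `P_n(T,g,δ,ε) = sup_x sup { Σ_{y∈E} e^{S_n g(y)} : E (n,δ)-separated ⊆ B(x,ε,n) }`. -/
noncomputable def sepPress [PseudoMetricSpace X] (T : X → X) (g : X → ℝ)
    (n : ℕ) (δ ε : ℝ) : ℝ :=
  ⨆ x : X, sSup {r | ∃ E : Finset X, ↑E ⊆ bowenBall T x ε n ∧ IsSep T n δ E ∧
    r = ∑ y ∈ E, Real.exp (birkhoff T g n y)}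

/-- The classical topological tail pressure
`P*(T,g) = lim_{ε→0} lim_{δ→0} limsup_n (1/n) log P_n(T,g,δ,ε)`
(the inner limits are monotone, hence given by `inf_ε sup_δ`). -/
noncomputable def tailPress [PseudoMetricSpace X] (T : X → X) (g : X → ℝ) : EReal :=
  ⨅ ε : {ε : ℝ // 0 < ε}, ⨆ δ : {δ : ℝ // 0 < δ},
    Filter.atTop.limsup fun n : ℕ => ((Real.log (sepPress T g n δ.1 ε.1) / (n : ℝ) : ℝ) : EReal)



/-- Pointwise log-sum inequality. -/
lemma keyL {x y : ℝ} (hx : 0 ≤ x) (hy : 0 ≤ y) (hxy : y = 0 → x = 0) :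
    x - y ≤ x * Real.log x - x * Real.log y := by
  rcases eq_or_lt_of_le hx with h | hxpos
  · simp [← h]; exact hy
  have hypos : 0 < y := lt_of_le_of_ne hy fun h => by
    simp [hxy h.symm] at hxpos
  have hlog : Real.log (y / x) ≤ y / x - 1 := Real.log_le_sub_one_of_pos (by positivity)
  have : Real.log y - Real.log x ≤ y / x - 1 := by
    rwa [Real.log_div (ne_of_gt hypos) (ne_of_gt hxpos)] at hlog
  have h2 := mul_le_mul_of_nonneg_left this hx
  have h3 : x * (y / x - 1) = y - x := by field_simp
  rw [h3, mul_sub] at h2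
  linarith

/-- bound: for `0 ≤ g ≤ s ≤ 1`, `|g * log s| ≤ 1`. -/
lemma keyBound {g s : ℝ} (hg : 0 ≤ g) (hgs : g ≤ s) (hs1 : s ≤ 1) :
    |g * Real.log s| ≤ 1 := by
  rcases eq_or_lt_of_le (hg.trans hgs) with h | hspos
  · simp [← h]
  have hlog : Real.log s ≤ 0 := Real.log_nonpos (le_of_lt hspos) hs1
  rw [abs_of_nonpos (mul_nonpos_of_nonneg_of_nonpos hg hlog)]
  have h1 : -(g * Real.log s) ≤ -(s * Real.log s) := by
    have := mul_le_mul_of_nonneg_right hgs (neg_nonneg.2 hlog)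
    nlinarith
  have h2 : -(s * Real.log s) ≤ 1 - s := by
    have := Real.log_le_sub_one_of_pos (show (0:ℝ) < 1/s by positivity)
    rw [Real.log_div one_ne_zero (ne_of_gt hspos), Real.log_one] at this
    have h4 := mul_le_mul_of_nonneg_left this (le_of_lt hspos)
    have h5 : s * (1 / s - 1) = 1 - s := by field_simp
    rw [h5, mul_sub] at h4
    nlinarith
  linarith [hg.trans hgs]

lemma keyBound' {g : ℝ} (hg : 0 ≤ g) (hg1 : g ≤ 1) : |g * Real.log g| ≤ 1 :=
  keyBound hg le_rfl hg1
section Integrals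
variable {Z : Type*} [MeasurableSpace Z] {μ : MeasureTheory.Measure Z}

lemma integrable_of_bdd [MeasureTheory.IsFiniteMeasure μ] {f : Z → ℝ} {C : ℝ}
    (hm : Measurable f) (hb : ∀ z, |f z| ≤ C) : MeasureTheory.Integrable f μ :=
  ⟨hm.aestronglyMeasurable, MeasureTheory.HasFiniteIntegral.of_bounded
    (MeasureTheory.ae_of_all μ (fun z => by simpa using hb z))⟩

/-- The entropy functional `F(g) = -μ(g) log μ(g) + μ(g log g)`. -/
noncomputable def Fent (μ : MeasureTheory.Measure Z) (g : Z → ℝ) : ℝ :=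
  -((∫ z, g z ∂μ) * Real.log (∫ z, g z ∂μ)) + ∫ z, g z * Real.log (g z) ∂μ

variable [MeasureTheory.IsProbabilityMeasure μ]

/-- Integral log-sum inequality. -/
lemma integral_logsum {g s : Z → ℝ} (hgm : Measurable g) (hsm : Measurable s)
    (hg0 : ∀ z, 0 ≤ g z) (hgs : ∀ z, g z ≤ s z) (hs1 : ∀ z, s z ≤ 1) :
    (∫ z, g z ∂μ) * Real.log (∫ z, g z ∂μ) - (∫ z, g z ∂μ) * Real.log (∫ z, s z ∂μ) ≤
      ∫ z, (g z * Real.log (g z) - g z * Real.log (s z)) ∂μ := by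
  have hs0 : ∀ z, 0 ≤ s z := fun z => (hg0 z).trans (hgs z)
  have hg1 : ∀ z, g z ≤ 1 := fun z => (hgs z).trans (hs1 z)
  have hgi : MeasureTheory.Integrable g μ := integrable_of_bdd hgm
    (fun z => by rw [abs_of_nonneg (hg0 z)]; exact hg1 z)
  have hsi : MeasureTheory.Integrable s μ := integrable_of_bdd hsm
    (fun z => by rw [abs_of_nonneg (hs0 z)]; exact hs1 z)
  have hglm : Measurable fun z => g z * Real.log (g z) := hgm.mul (Real.measurable_log.comp hgm)
  have hgsm : Measurable fun z => g z * Real.log (s z) := hgm.mul (Real.measurable_log.comp hsm)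
  have hgli : MeasureTheory.Integrable (fun z => g z * Real.log (g z)) μ :=
    integrable_of_bdd hglm (fun z => keyBound' (hg0 z) (hg1 z))
  have hgsi : MeasureTheory.Integrable (fun z => g z * Real.log (s z)) μ :=
    integrable_of_bdd hgsm (fun z => keyBound (hg0 z) (hgs z) (hs1 z))
  have hinti : MeasureTheory.Integrable (fun z => g z * Real.log (g z) - g z * Real.log (s z)) μ :=
    hgli.sub hgsi
  set a := ∫ z, g z ∂μ with ha
  set c := ∫ z, s z ∂μ with hc
  have ha0 : 0 ≤ a := MeasureTheory.integral_nonneg hg0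
  have hac : a ≤ c := MeasureTheory.integral_mono hgi hsi hgs
  rcases eq_or_lt_of_le ha0 with haz | hapos
  · -- a = 0 : g = 0 a.e.
    have hgz : g =ᵐ[μ] 0 :=
      (MeasureTheory.integral_eq_zero_iff_of_nonneg hg0 hgi).1 haz.symm
    have : (fun z => g z * Real.log (g z) - g z * Real.log (s z)) =ᵐ[μ] 0 := by
      filter_upwards [hgz] with z hz
      simp [hz]
    rw [MeasureTheory.integral_congr_ae this]
    simp [← haz]
  · have hcpos : 0 < c := lt_of_lt_of_le hapos hac
    -- pointwise inequality
    have hpt : ∀ z, g z - (a / c) * s z + g z * Real.log (a / c) ≤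
        g z * Real.log (g z) - g z * Real.log (s z) := by
      intro z
      rcases eq_or_lt_of_le (hg0 z) with hgz | hgzpos
      · have : (0:ℝ) ≤ (a / c) * s z := mul_nonneg (div_nonneg ha0 hcpos.le) (hs0 z)
        simp [← hgz]; linarith
      · have hszpos : 0 < s z := lt_of_lt_of_le hgzpos (hgs z)
        have hy : (0:ℝ) < (a / c) * s z := by positivity
        have hk := keyL (hg0 z) (le_of_lt hy) (fun h => absurd h (ne_of_gt hy))
        have hsplit : Real.log ((a / c) * s z) = Real.log (a / c) + Real.log (s z) :=
          Real.log_mul (div_pos hapos hcpos).ne' (ne_of_gt hszpos)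
        rw [hsplit, mul_add] at hk
        linarith
    have i1 : MeasureTheory.Integrable (fun z => a / c * s z) μ := hsi.const_mul _
    have i3 : MeasureTheory.Integrable (fun z => g z * Real.log (a / c)) μ := hgi.mul_const _
    have i2 : MeasureTheory.Integrable (fun z => g z - a / c * s z) μ := by
      exact hgi.sub i1
    have hLi : MeasureTheory.Integrable
        (fun z => g z - a / c * s z + g z * Real.log (a / c)) μ := by
      exact i2.add i3
    have hmono := MeasureTheory.integral_mono hLi hinti hpt
    have hcalc : ∫ z, (g z - a / c * s z + g z * Real.log (a / c)) ∂μ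
        = a - a / c * c + a * Real.log (a / c) := by
      rw [MeasureTheory.integral_add i2 i3, MeasureTheory.integral_sub hgi i1,
        MeasureTheory.integral_mul_const, MeasureTheory.integral_const_mul, ← ha, ← hc]
    rw [hcalc] at hmono
    have hdc : (a / c) * c = a := div_mul_cancel₀ a (ne_of_gt hcpos)
    have hld : Real.log (a / c) = Real.log a - Real.log c :=
      Real.log_div (ne_of_gt hapos) (ne_of_gt hcpos)
    rw [hdc, hld] at hmono
    nlinarith [hmono]
end Integrals
section Fent
variable {Z : Type*} [MeasurableSpace Z] {μ : MeasureTheory.Measure Z}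
  [MeasureTheory.IsProbabilityMeasure μ]

lemma Fent_nonneg {g : Z → ℝ} (hgm : Measurable g) (hg0 : ∀ z, 0 ≤ g z)
    (hg1 : ∀ z, g z ≤ 1) : 0 ≤ Fent μ g := by
  have h := integral_logsum (μ := μ) hgm measurable_const hg0 hg1 (fun z => le_rfl)
  simp only [MeasureTheory.integral_const, MeasureTheory.measure_univ, ENNReal.toReal_one, probReal_univ,
    smul_eq_mul, one_mul, Real.log_one, mul_zero, sub_zero] at h
  unfold Fent
  linarith [h]

lemma Fent_add_le {g₁ g₂ : Z → ℝ} (h1m : Measurable g₁) (h2m : Measurable g₂)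
    (h10 : ∀ z, 0 ≤ g₁ z) (h20 : ∀ z, 0 ≤ g₂ z) (hs1 : ∀ z, g₁ z + g₂ z ≤ 1) :
    Fent μ (fun z => g₁ z + g₂ z) ≤ Fent μ g₁ + Fent μ g₂ := by
  set s : Z → ℝ := fun z => g₁ z + g₂ z with hs
  have hsm : Measurable s := h1m.add h2m
  have hs0 : ∀ z, 0 ≤ s z := fun z => add_nonneg (h10 z) (h20 z)
  have h1s : ∀ z, g₁ z ≤ s z := fun z => le_add_of_nonneg_right (h20 z)
  have h2s : ∀ z, g₂ z ≤ s z := fun z => le_add_of_nonneg_left (h10 z)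
  have h11 : ∀ z, g₁ z ≤ 1 := fun z => (h1s z).trans (hs1 z)
  have h21 : ∀ z, g₂ z ≤ 1 := fun z => (h2s z).trans (hs1 z)
  have I1 := integral_logsum (μ := μ) h1m hsm h10 h1s hs1
  have I2 := integral_logsum (μ := μ) h2m hsm h20 h2s hs1
  have hg1i : MeasureTheory.Integrable g₁ μ := integrable_of_bdd h1m
    (fun z => by rw [abs_of_nonneg (h10 z)]; exact h11 z)
  have hg2i : MeasureTheory.Integrable g₂ μ := integrable_of_bdd h2m
    (fun z => by rw [abs_of_nonneg (h20 z)]; exact h21 z)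
  have i1l : MeasureTheory.Integrable (fun z => g₁ z * Real.log (g₁ z)) μ :=
    integrable_of_bdd (h1m.mul (Real.measurable_log.comp h1m))
      (fun z => keyBound' (h10 z) (h11 z))
  have i2l : MeasureTheory.Integrable (fun z => g₂ z * Real.log (g₂ z)) μ :=
    integrable_of_bdd (h2m.mul (Real.measurable_log.comp h2m))
      (fun z => keyBound' (h20 z) (h21 z))
  have i1s : MeasureTheory.Integrable (fun z => g₁ z * Real.log (s z)) μ :=
    integrable_of_bdd (h1m.mul (Real.measurable_log.comp hsm))
      (fun z => keyBound (h10 z) (h1s z) (hs1 z))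
  have i2s : MeasureTheory.Integrable (fun z => g₂ z * Real.log (s z)) μ :=
    integrable_of_bdd (h2m.mul (Real.measurable_log.comp hsm))
      (fun z => keyBound (h20 z) (h2s z) (hs1 z))
  rw [MeasureTheory.integral_sub i1l i1s] at I1
  rw [MeasureTheory.integral_sub i2l i2s] at I2
  have hc : ∫ z, s z ∂μ = (∫ z, g₁ z ∂μ) + ∫ z, g₂ z ∂μ :=
    MeasureTheory.integral_add hg1i hg2i
  have hslog : ∫ z, s z * Real.log (s z) ∂μ =
      (∫ z, g₁ z * Real.log (s z) ∂μ) + ∫ z, g₂ z * Real.log (s z) ∂μ := by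
    rw [← MeasureTheory.integral_add i1s i2s]
    exact MeasureTheory.integral_congr_ae (MeasureTheory.ae_of_all μ
      (fun z => by simp [hs, add_mul]))
  unfold Fent
  rw [hc, hslog]
  have hexp : ((∫ z, g₁ z ∂μ) + ∫ z, g₂ z ∂μ) * Real.log ((∫ z, g₁ z ∂μ) + ∫ z, g₂ z ∂μ)
      = (∫ z, g₁ z ∂μ) * Real.log ((∫ z, g₁ z ∂μ) + ∫ z, g₂ z ∂μ)
        + (∫ z, g₂ z ∂μ) * Real.log ((∫ z, g₁ z ∂μ) + ∫ z, g₂ z ∂μ) := add_mul _ _ _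
  rw [hexp]
  rw [hc] at I1 I2
  linarith [I1, I2]

lemma Fent_sum_le {ι : Type*} (t : Finset ι) (g : ι → Z → ℝ)
    (hm : ∀ i, Measurable (g i)) (h0 : ∀ i z, 0 ≤ g i z)
    (h1 : ∀ z, ∑ i ∈ t, g i z ≤ 1) :
    Fent μ (fun z => ∑ i ∈ t, g i z) ≤ ∑ i ∈ t, Fent μ (g i) := by
  induction t using Finset.cons_induction with
  | empty => simp [Fent]
  | cons a t ha IH =>
    simp only [Finset.sum_cons]
    have hsum1 : ∀ z, g a z + ∑ i ∈ t, g i z ≤ 1 := by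
      intro z; have := h1 z; rwa [Finset.sum_cons] at this
    have htle : ∀ z, ∑ i ∈ t, g i z ≤ 1 := fun z =>
      le_trans (le_add_of_nonneg_left (h0 a z)) (hsum1 z)
    calc Fent μ (fun z => g a z + ∑ i ∈ t, g i z)
        ≤ Fent μ (g a) + Fent μ (fun z => ∑ i ∈ t, g i z) :=
          Fent_add_le (hm a) (Finset.measurable_sum t (fun i _ => hm i))
            (h0 a) (fun z => Finset.sum_nonneg (fun i _ => h0 i z)) hsum1
      _ ≤ Fent μ (g a) + ∑ i ∈ t, Fent μ (g i) := by
          linarith [IH htle]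

end Fent

section Marginal
variable {X Y : Type*} [MeasurableSpace X] [MeasurableSpace Y]

lemma Fent_map_fst (μ : MeasureTheory.Measure (X × Y)) {φ : X → ℝ} (hφ : Measurable φ) :
    Fent (μ.map Prod.fst) φ = Fent μ (fun z => φ z.1) := by
  unfold Fent
  rw [MeasureTheory.integral_map measurable_fst.aemeasurable hφ.aestronglyMeasurable,
    MeasureTheory.integral_map measurable_fst.aemeasurable
      ((show Measurable fun x => φ x * Real.log (φ x) from
        hφ.mul (Real.measurable_log.comp hφ)).aestronglyMeasurable)]

lemma Fent_map_snd (μ : MeasureTheory.Measure (X × Y)) {ψ : Y → ℝ} (hψ : Measurable ψ) :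
    Fent (μ.map Prod.snd) ψ = Fent μ (fun z => ψ z.2) := by
  unfold Fent
  rw [MeasureTheory.integral_map measurable_snd.aemeasurable hψ.aestronglyMeasurable,
    MeasureTheory.integral_map measurable_snd.aemeasurable
      ((show Measurable fun y => ψ y * Real.log (ψ y) from
        hψ.mul (Real.measurable_log.comp hψ)).aestronglyMeasurable)]

end Marginal
section Shannon

lemma shannon_subadd {m k : ℕ} (p : Fin m → Fin k → ℝ) (h0 : ∀ i j, 0 ≤ p i j)
    (hsum : ∑ i, ∑ j, p i j = 1) :
    ∑ i, ∑ j, -(p i j * Real.log (p i j)) ≤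
      (∑ i, -((∑ j, p i j) * Real.log (∑ j, p i j)))
        + ∑ j, -((∑ i, p i j) * Real.log (∑ i, p i j)) := by
  set r : Fin m → ℝ := fun i => ∑ j, p i j with hr
  set c : Fin k → ℝ := fun j => ∑ i, p i j with hc
  have hr0 : ∀ i, 0 ≤ r i := fun i => Finset.sum_nonneg (fun j _ => h0 i j)
  have hc0 : ∀ j, 0 ≤ c j := fun j => Finset.sum_nonneg (fun i _ => h0 i j)
  have hpr : ∀ i j, p i j ≤ r i := fun i j =>
    Finset.single_le_sum (fun j _ => h0 i j) (Finset.mem_univ j)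
  have hpc : ∀ i j, p i j ≤ c j := fun i j =>
    Finset.single_le_sum (fun i _ => h0 i j) (Finset.mem_univ i)
  have hr1 : ∑ i, r i = 1 := hsum
  have hc1 : ∑ j, c j = 1 := by rw [hc]; rw [Finset.sum_comm]; exact hsum
  have key : ∀ i j, p i j - r i * c j ≤
      p i j * Real.log (p i j) - p i j * Real.log (r i) - p i j * Real.log (c j) := by
    intro i j
    rcases eq_or_lt_of_le (h0 i j) with hz | hpos
    · simp [← hz]
      exact mul_nonneg (hr0 i) (hc0 j)
    · have hri : 0 < r i := lt_of_lt_of_le hpos (hpr i j)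
      have hcj : 0 < c j := lt_of_lt_of_le hpos (hpc i j)
      have hk := keyL (h0 i j) (le_of_lt (mul_pos hri hcj))
        (fun h => absurd h (ne_of_gt (mul_pos hri hcj)))
      rw [Real.log_mul (ne_of_gt hri) (ne_of_gt hcj), mul_add] at hk
      linarith
  have main := Finset.sum_le_sum (fun i (_ : i ∈ Finset.univ) =>
    Finset.sum_le_sum (fun j (_ : j ∈ Finset.univ) => key i j))
  have eL : ∑ i, ∑ j, (p i j - r i * c j) = 0 := by
    have : ∀ i, ∑ j, (p i j - r i * c j) = r i - r i * (∑ j, c j) := by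
      intro i
      rw [Finset.sum_sub_distrib, ← Finset.mul_sum]
    rw [Finset.sum_congr rfl (fun i _ => this i)]
    rw [hc1, Finset.sum_sub_distrib]
    simp [hr1]
  have eR : ∑ i, ∑ j, (p i j * Real.log (p i j) - p i j * Real.log (r i)
      - p i j * Real.log (c j))
      = (∑ i, ∑ j, p i j * Real.log (p i j)) - (∑ i, r i * Real.log (r i))
        - ∑ j, c j * Real.log (c j) := by
    have e1 : ∀ i, ∑ j, (p i j * Real.log (p i j) - p i j * Real.log (r i)
        - p i j * Real.log (c j))
        = (∑ j, p i j * Real.log (p i j)) - r i * Real.log (r i)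
          - ∑ j, p i j * Real.log (c j) := by
      intro i
      rw [Finset.sum_sub_distrib, Finset.sum_sub_distrib, ← Finset.sum_mul]
    rw [Finset.sum_congr rfl (fun i _ => e1 i), Finset.sum_sub_distrib,
      Finset.sum_sub_distrib]
    congr 1
    rw [Finset.sum_comm]
    exact Finset.sum_congr rfl (fun j _ => (Finset.sum_mul ..).symm)
  rw [eL, eR] at main
  have g1 : ∑ i, ∑ j, -(p i j * Real.log (p i j))
      = -∑ i, ∑ j, p i j * Real.log (p i j) := by
    rw [← Finset.sum_neg_distrib]
    exact Finset.sum_congr rfl (fun i _ => Finset.sum_neg_distrib _)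
  have g2 : ∑ i, -(r i * Real.log (r i)) = -∑ i, r i * Real.log (r i) :=
    Finset.sum_neg_distrib _
  have g3 : ∑ j, -(c j * Real.log (c j)) = -∑ j, c j * Real.log (c j) :=
    Finset.sum_neg_distrib _
  rw [g1]
  calc -∑ i, ∑ j, p i j * Real.log (p i j)
      ≤ -(∑ i, r i * Real.log (r i)) - ∑ j, c j * Real.log (c j) := by linarith
    _ = (∑ i, -(r i * Real.log (r i))) + ∑ j, -(c j * Real.log (c j)) := by
        rw [g2, g3]; ring

lemma shannon_le_log {N : ℕ} (hN : 0 < N) (p : Fin N → ℝ) (h0 : ∀ i, 0 ≤ p i)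
    (h1 : ∑ i, p i = 1) : ∑ i, -(p i * Real.log (p i)) ≤ Real.log N := by
  have hNpos : (0:ℝ) < N := by exact_mod_cast hN
  have key : ∀ i, p i - 1 / N ≤ p i * Real.log (p i) - p i * Real.log (1 / N) :=
    fun i => keyL (h0 i) (by positivity) (fun h => absurd h (by positivity))
  have main := Finset.sum_le_sum (fun i (_ : i ∈ Finset.univ) => key i)
  rw [Finset.sum_sub_distrib, Finset.sum_sub_distrib, ← Finset.sum_mul, h1] at main
  simp only [Finset.sum_const, Finset.card_univ, Fintype.card_fin, nsmul_eq_mul] at main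
  rw [one_div, Real.log_inv] at main
  have hNN : (N:ℝ) * (N:ℝ)⁻¹ = 1 := mul_inv_cancel₀ (ne_of_gt hNpos)
  rw [hNN] at main
  have : ∑ i, -(p i * Real.log (p i)) = -∑ i, p i * Real.log (p i) :=
    Finset.sum_neg_distrib _
  rw [this]
  linarith

end Shannon
section PUEquiv

namespace PartUnity
variable {X Y : Type*}

/-- Two partitions of unity are equivalent if they agree up to an index bijection. -/
def Equiv' (P Q : PartUnity X) : Prop :=
  ∃ e : Fin P.n ≃ Fin Q.n, ∀ i x, P.f i x = Q.f (e i) x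

lemma Equiv'.refl' {P : PartUnity X} : Equiv' P P := ⟨Equiv.refl _, fun _ _ => Eq.refl _⟩

lemma Equiv'.trans {P Q R : PartUnity X} (h : Equiv' P Q) (h' : Equiv' Q R) :
    Equiv' P R := by
  obtain ⟨e, he⟩ := h; obtain ⟨e', he'⟩ := h'
  exact ⟨e.trans e', fun i x => (he i x).trans (he' (e i) x)⟩

lemma Equiv'.comp {P Q : PartUnity X} (h : Equiv' P Q) (T : Y → X) :
    Equiv' (P.comp T) (Q.comp T) := by
  obtain ⟨e, he⟩ := h
  exact ⟨e, fun i y => he i (T y)⟩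

lemma Equiv'.join_right {P Q : PartUnity X} (A : PartUnity X) (h : Equiv' P Q) :
    Equiv' (A.join P) (A.join Q) := by
  obtain ⟨e, he⟩ := h
  refine ⟨finProdFinEquiv.symm.trans (((Equiv.refl (Fin A.n)).prodCongr e).trans
    finProdFinEquiv), fun i x => ?_⟩
  simp only [join]
  erw [Equiv.trans_apply, Equiv.trans_apply]
  simp only [Equiv.prodCongr_apply, Equiv.coe_refl,
    Equiv.symm_apply_apply, Prod.map_fst, Prod.map_snd, id_eq]
  rw [he]

lemma equiv_join_prod (A C : PartUnity X) (B D : PartUnity Y) :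
    Equiv' ((A.prod B).join (C.prod D)) ((A.join C).prod (B.join D)) := by
  refine ⟨finProdFinEquiv.symm.trans (((finProdFinEquiv.symm.prodCongr
      finProdFinEquiv.symm).trans ((Equiv.prodProdProdComm (Fin A.n) (Fin B.n) (Fin C.n)
      (Fin D.n)).trans (finProdFinEquiv.prodCongr finProdFinEquiv))).trans
      finProdFinEquiv), fun i z => ?_⟩
  simp only [join, prod]
  erw [Equiv.trans_apply, Equiv.trans_apply, Equiv.trans_apply, Equiv.trans_apply]
  simp only [Equiv.prodCongr_apply, Prod.map_fst,
    Prod.map_snd, Equiv.prodProdProdComm_apply, Equiv.symm_apply_apply]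
  ring

lemma prod_comp (A : PartUnity X) (B : PartUnity Y) (T : X → X) (S : Y → Y) :
    (A.prod B).comp (Prod.map T S) = (A.comp T).prod (B.comp S) := rfl

/-- The key structural fact: the dynamical refinement of a product partition is
equivalent to the product of the dynamical refinements. -/
lemma dyn_prod_equiv (T : X → X) (S : Y → Y) (Φ : PartUnity X) (Ψ : PartUnity Y) :
    ∀ n, Equiv' (dyn (Prod.map T S) (Φ.prod Ψ) n) ((dyn T Φ n).prod (dyn S Ψ n))
  | 0 => by
    refine ⟨finCongr (by simp [dyn, triv, prod]), fun i z => ?_⟩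
    simp [dyn, triv, prod]
  | (n+1) => by
    have IH := dyn_prod_equiv T S Φ Ψ n
    show Equiv' ((Φ.prod Ψ).join ((dyn (Prod.map T S) (Φ.prod Ψ) n).comp (Prod.map T S))) _
    refine Equiv'.trans (Equiv'.join_right _ ((IH.comp (Prod.map T S)))) ?_
    rw [prod_comp]
    exact equiv_join_prod Φ (Φ.dyn T n |>.comp T) Ψ ((Ψ.dyn S n).comp S)

lemma dyn_n (T : X → X) (Φ : PartUnity X) : ∀ n, (dyn T Φ n).n = Φ.n ^ n
  | 0 => rfl
  | (n+1) => by
    show Φ.n * (dyn T Φ n).n = Φ.n ^ (n+1)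
    rw [dyn_n T Φ n, pow_succ, mul_comm]

lemma n_pos [Nonempty X] (P : PartUnity X) : 0 < P.n := by
  rcases Nat.eq_zero_or_pos P.n with h | h
  · have hs := P.sum_one (Classical.arbitrary X)
    rw [Finset.sum_eq_zero (fun i _ => absurd i.isLt (by omega))] at hs
    exact absurd hs.symm one_ne_zero
  · exact h

section Cont
variable [TopologicalSpace X] [TopologicalSpace Y]

lemma Cont.join {P Q : PartUnity X} (hP : P.Cont) (hQ : Q.Cont) : (P.join Q).Cont :=
  fun i => (hP _).mul (hQ _)

lemma Cont.comp {P : PartUnity X} (hP : P.Cont) {T : Y → X} (hT : Continuous T) :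
    (P.comp T).Cont := fun i => (hP i).comp hT

lemma Cont.prod {P : PartUnity X} {Q : PartUnity Y} (hP : P.Cont) (hQ : Q.Cont) :
    (P.prod Q).Cont := fun i => ((hP _).comp continuous_fst).mul ((hQ _).comp continuous_snd)

lemma cont_triv : (triv X).Cont := fun _ => continuous_const

lemma Cont.dyn {P : PartUnity X} (hP : P.Cont) {T : X → X} (hT : Continuous T) :
    ∀ n, (dyn T P n).Cont
  | 0 => cont_triv
  | (n+1) => hP.join ((Cont.dyn hP hT n).comp hT)

end Cont

end PartUnity

end PUEquiv
section StatEntLemmas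

open MeasureTheory

variable {X Y : Type*} [MeasurableSpace X] [MeasurableSpace Y]

lemma statEnt_eq_sum (μ : Measure X) (P : PartUnity X) :
    statEnt μ P = ∑ i, Fent μ (P.f i) := rfl

lemma statEnt_congr (μ : Measure X) {P Q : PartUnity X} (h : P.Equiv' Q) :
    statEnt μ P = statEnt μ Q := by
  obtain ⟨e, he⟩ := h
  rw [statEnt_eq_sum, statEnt_eq_sum, ← Equiv.sum_comp e (fun j => Fent μ (Q.f j))]
  exact Finset.sum_congr rfl (fun i _ => congrArg (Fent μ) (funext (he i)))

lemma statEnt_prod_eq (μ : Measure (X × Y)) (A : PartUnity X) (B : PartUnity Y) :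
    statEnt μ (A.prod B) = ∑ i, ∑ j, Fent μ (fun z => A.f i z.1 * B.f j z.2) := by
  rw [statEnt_eq_sum]
  have e1 : ∑ i : Fin (A.prod B).n, Fent μ ((A.prod B).f i)
      = ∑ k : Fin A.n × Fin B.n, Fent μ ((A.prod B).f (finProdFinEquiv k)) :=
    (Equiv.sum_comp finProdFinEquiv (fun i => Fent μ ((A.prod B).f i))).symm
  rw [e1, Fintype.sum_prod_type]
  refine Finset.sum_congr rfl (fun i _ => Finset.sum_congr rfl (fun j _ => ?_))
  refine congrArg (Fent μ) (funext (fun z => ?_))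
  simp only [PartUnity.prod, Equiv.symm_apply_apply]

variable {μ : Measure (X × Y)} [IsProbabilityMeasure μ]
  {A : PartUnity X} {B : PartUnity Y}

private lemma gmeas (hA : A.Meas) (hB : B.Meas) (i : Fin A.n) (j : Fin B.n) :
    Measurable fun z : X × Y => A.f i z.1 * B.f j z.2 :=
  ((hA i).comp measurable_fst).mul ((hB j).comp measurable_snd)

private lemma gnonneg (i : Fin A.n) (j : Fin B.n) (z : X × Y) :
    0 ≤ A.f i z.1 * B.f j z.2 := mul_nonneg (A.nonneg _ _) (B.nonneg _ _)

private lemma gsumB (A : PartUnity X) (B : PartUnity Y) (i : Fin A.n) (z : X × Y) :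
    ∑ j, A.f i z.1 * B.f j z.2 = A.f i z.1 := by
  rw [← Finset.mul_sum, B.sum_one, mul_one]

private lemma gsumA (A : PartUnity X) (B : PartUnity Y) (j : Fin B.n) (z : X × Y) :
    ∑ i, A.f i z.1 * B.f j z.2 = B.f j z.2 := by
  rw [← Finset.sum_mul, A.sum_one, one_mul]

/-- Lower bound: the first marginal entropy is at most the product entropy. -/
lemma statEnt_fst_le (hA : A.Meas) (hB : B.Meas) :
    statEnt (μ.map Prod.fst) A ≤ statEnt μ (A.prod B) := by
  rw [statEnt_prod_eq, statEnt_eq_sum]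
  refine Finset.sum_le_sum (fun i _ => ?_)
  rw [Fent_map_fst μ (hA i)]
  have h2 : (fun z : X × Y => A.f i z.1) = fun z => ∑ j, A.f i z.1 * B.f j z.2 := by
    funext z; rw [gsumB]
  rw [h2]
  refine Fent_sum_le Finset.univ _ (fun j => gmeas hA hB i j) (fun j z => gnonneg i j z)
    (fun z => ?_)
  rw [gsumB]; exact A.le_one i z.1

/-- Lower bound: the second marginal entropy is at most the product entropy. -/
lemma statEnt_snd_le (hA : A.Meas) (hB : B.Meas) :
    statEnt (μ.map Prod.snd) B ≤ statEnt μ (A.prod B) := by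
  rw [statEnt_prod_eq, statEnt_eq_sum, Finset.sum_comm]
  refine Finset.sum_le_sum (fun j _ => ?_)
  rw [Fent_map_snd μ (hB j)]
  have h2 : (fun z : X × Y => B.f j z.2) = fun z => ∑ i, A.f i z.1 * B.f j z.2 := by
    funext z; rw [gsumA]
  rw [h2]
  refine Fent_sum_le Finset.univ _ (fun i => gmeas hA hB i j) (fun i z => gnonneg i j z)
    (fun z => ?_)
  rw [gsumA]; exact B.le_one j z.2

end StatEntLemmas
section Subadd
open MeasureTheory

variable {X Y : Type*} [MeasurableSpace X] [MeasurableSpace Y]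
  {μ : Measure (X × Y)} [IsProbabilityMeasure μ] {A : PartUnity X} {B : PartUnity Y}

/-- Subadditivity: the product entropy is at most the sum of the marginal entropies. -/
lemma statEnt_prod_le (hA : A.Meas) (hB : B.Meas) :
    statEnt μ (A.prod B) ≤ statEnt (μ.map Prod.fst) A + statEnt (μ.map Prod.snd) B := by
  have hm : ∀ (i : Fin A.n) (j : Fin B.n), Measurable fun z : X × Y => A.f i z.1 * B.f j z.2 :=
    fun i j => gmeas hA hB i j
  have h0 : ∀ i j (z : X × Y), 0 ≤ A.f i z.1 * B.f j z.2 := fun i j z => gnonneg i j z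
  have hgA : ∀ i j (z : X × Y), A.f i z.1 * B.f j z.2 ≤ A.f i z.1 := fun i j z =>
    mul_le_of_le_one_right (A.nonneg _ _) (B.le_one _ _)
  have hgB : ∀ i j (z : X × Y), A.f i z.1 * B.f j z.2 ≤ B.f j z.2 := fun i j z =>
    mul_le_of_le_one_left (B.nonneg _ _) (A.le_one _ _)
  have h1 : ∀ i j (z : X × Y), A.f i z.1 * B.f j z.2 ≤ 1 := fun i j z =>
    le_trans (hgA i j z) (A.le_one _ _)
  have hgi : ∀ i j, Integrable (fun z : X × Y => A.f i z.1 * B.f j z.2) μ := fun i j =>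
    integrable_of_bdd (hm i j) (fun z => by rw [abs_of_nonneg (h0 i j z)]; exact h1 i j z)
  set p : Fin A.n → Fin B.n → ℝ := fun i j => ∫ z, A.f i z.1 * B.f j z.2 ∂μ with hp
  have p0 : ∀ i j, 0 ≤ p i j := fun i j => integral_nonneg (h0 i j)
  -- row and column sums
  have hrow : ∀ i, ∑ j, p i j = ∫ z, A.f i ((z : X × Y)).1 ∂μ := by
    intro i
    rw [hp, ← integral_finset_sum _ (fun j _ => hgi i j)]
    exact integral_congr_ae (ae_of_all _ (fun z => gsumB A B i z))
  have hcol : ∀ j, ∑ i, p i j = ∫ z, B.f j ((z : X × Y)).2 ∂μ := by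
    intro j
    rw [hp, ← integral_finset_sum _ (fun i _ => hgi i j)]
    exact integral_congr_ae (ae_of_all _ (fun z => gsumA A B j z))
  have hAfi : ∀ i, Integrable (fun z : X × Y => A.f i z.1) μ := fun i =>
    integrable_of_bdd ((hA i).comp measurable_fst)
      (fun z => by rw [abs_of_nonneg (A.nonneg _ _)]; exact A.le_one _ _)
  have hBfj : ∀ j, Integrable (fun z : X × Y => B.f j z.2) μ := fun j =>
    integrable_of_bdd ((hB j).comp measurable_snd)
      (fun z => by rw [abs_of_nonneg (B.nonneg _ _)]; exact B.le_one _ _)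
  have psum1 : ∑ i, ∑ j, p i j = 1 := by
    rw [Finset.sum_congr rfl (fun i _ => hrow i),
      ← integral_finset_sum _ (fun i _ => hAfi i)]
    have : (fun z : X × Y => ∑ i, A.f i z.1) = fun _ => (1:ℝ) := by
      funext z; exact A.sum_one z.1
    rw [this]
    simp
  -- splitting the integral of g log g
  have iA : ∀ i j, Integrable (fun z : X × Y =>
      (A.f i z.1 * B.f j z.2) * Real.log (A.f i z.1)) μ := fun i j =>
    integrable_of_bdd ((hm i j).mul (Real.measurable_log.comp ((hA i).comp measurable_fst)))
      (fun z => keyBound (h0 i j z) (hgA i j z) (A.le_one _ _))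
  have iB : ∀ i j, Integrable (fun z : X × Y =>
      (A.f i z.1 * B.f j z.2) * Real.log (B.f j z.2)) μ := fun i j =>
    integrable_of_bdd ((hm i j).mul (Real.measurable_log.comp ((hB j).comp measurable_snd)))
      (fun z => keyBound (h0 i j z) (hgB i j z) (B.le_one _ _))
  have hsplit : ∀ i j, (∫ z, (A.f i ((z:X×Y)).1 * B.f j z.2)
        * Real.log (A.f i z.1 * B.f j z.2) ∂μ)
      = (∫ z, (A.f i ((z:X×Y)).1 * B.f j z.2) * Real.log (A.f i z.1) ∂μ)
        + ∫ z, (A.f i ((z:X×Y)).1 * B.f j z.2) * Real.log (B.f j z.2) ∂μ := by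
    intro i j
    rw [← integral_add (iA i j) (iB i j)]
    refine integral_congr_ae (ae_of_all _ (fun z => ?_))
    dsimp only
    rcases eq_or_ne (A.f i z.1) 0 with ha | ha
    · simp [ha]
    rcases eq_or_ne (B.f j z.2) 0 with hb | hb
    · simp [hb]
    rw [Real.log_mul ha hb]; ring
  have hsumA : ∀ i, (∑ j, ∫ z, (A.f i ((z:X×Y)).1 * B.f j z.2) * Real.log (A.f i z.1) ∂μ)
      = ∫ z, A.f i ((z:X×Y)).1 * Real.log (A.f i z.1) ∂μ := by
    intro i
    rw [← integral_finset_sum _ (fun j _ => iA i j)]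
    refine integral_congr_ae (ae_of_all _ (fun z => ?_))
    dsimp only
    rw [← Finset.sum_mul, gsumB A B i z]
  have hsumB : ∀ j, (∑ i, ∫ z, (A.f i ((z:X×Y)).1 * B.f j z.2) * Real.log (B.f j z.2) ∂μ)
      = ∫ z, B.f j ((z:X×Y)).2 * Real.log (B.f j z.2) ∂μ := by
    intro j
    rw [← integral_finset_sum _ (fun i _ => iB i j)]
    refine integral_congr_ae (ae_of_all _ (fun z => ?_))
    dsimp only
    rw [← Finset.sum_mul, gsumA A B j z]
  -- decompose the product entropy
  have hdec : statEnt μ (A.prod B)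
      = (∑ i, ∑ j, -(p i j * Real.log (p i j)))
        + ((∑ i, ∫ z, A.f i ((z:X×Y)).1 * Real.log (A.f i z.1) ∂μ)
          + ∑ j, ∫ z, B.f j ((z:X×Y)).2 * Real.log (B.f j z.2) ∂μ) := by
    rw [statEnt_prod_eq]
    have e1 : ∀ i j, Fent μ (fun z : X × Y => A.f i z.1 * B.f j z.2)
        = -(p i j * Real.log (p i j))
          + ((∫ z, (A.f i ((z:X×Y)).1 * B.f j z.2) * Real.log (A.f i z.1) ∂μ)
            + ∫ z, (A.f i ((z:X×Y)).1 * B.f j z.2) * Real.log (B.f j z.2) ∂μ) := by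
      intro i j
      unfold Fent
      rw [← hsplit i j, hp]
    rw [Finset.sum_congr rfl (fun i _ => Finset.sum_congr rfl (fun j _ => e1 i j))]
    rw [Finset.sum_congr rfl (fun i _ => Finset.sum_add_distrib),
      Finset.sum_add_distrib]
    congr 1
    rw [Finset.sum_congr rfl (fun i _ => Finset.sum_add_distrib),
      Finset.sum_add_distrib]
    congr 1
    · exact Finset.sum_congr rfl (fun i _ => hsumA i)
    · rw [Finset.sum_comm]
      exact Finset.sum_congr rfl (fun j _ => hsumB j)
  -- decompose the marginal entropies
  have hmargA : statEnt (μ.map Prod.fst) A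
      = (∑ i, -((∑ j, p i j) * Real.log (∑ j, p i j)))
        + ∑ i, ∫ z, A.f i ((z:X×Y)).1 * Real.log (A.f i z.1) ∂μ := by
    unfold statEnt
    rw [← Finset.sum_add_distrib]
    refine Finset.sum_congr rfl (fun i _ => ?_)
    rw [hrow i, integral_map measurable_fst.aemeasurable (hA i).aestronglyMeasurable,
      integral_map measurable_fst.aemeasurable
        ((show Measurable fun x => A.f i x * Real.log (A.f i x) from
          (hA i).mul (Real.measurable_log.comp (hA i))).aestronglyMeasurable)]
  have hmargB : statEnt (μ.map Prod.snd) B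
      = (∑ j, -((∑ i, p i j) * Real.log (∑ i, p i j)))
        + ∑ j, ∫ z, B.f j ((z:X×Y)).2 * Real.log (B.f j z.2) ∂μ := by
    unfold statEnt
    rw [← Finset.sum_add_distrib]
    refine Finset.sum_congr rfl (fun j _ => ?_)
    rw [hcol j, integral_map measurable_snd.aemeasurable (hB j).aestronglyMeasurable,
      integral_map measurable_snd.aemeasurable
        ((show Measurable fun y => B.f j y * Real.log (B.f j y) from
          (hB j).mul (Real.measurable_log.comp (hB j))).aestronglyMeasurable)]
  have hsh := shannon_subadd p p0 psum1
  rw [hdec, hmargA, hmargB]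
  linarith
end Subadd
section Bounds
open MeasureTheory

variable {Z : Type*} [MeasurableSpace Z] {μ : Measure Z} [IsProbabilityMeasure μ]

lemma statEnt_nonneg {P : PartUnity Z} (hP : P.Meas) : 0 ≤ statEnt μ P := by
  rw [statEnt_eq_sum]
  exact Finset.sum_nonneg (fun i _ => Fent_nonneg (hP i) (P.nonneg i) (P.le_one i))

lemma statEnt_le_log {P : PartUnity Z} (hP : P.Meas) (hn : 0 < P.n) :
    statEnt μ P ≤ Real.log P.n := by
  have hint : ∀ i, Integrable (P.f i) μ := fun i => integrable_of_bdd (hP i)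
    (fun z => by rw [abs_of_nonneg (P.nonneg i z)]; exact P.le_one i z)
  have hsum : ∑ i, ∫ z, P.f i z ∂μ = 1 := by
    rw [← integral_finset_sum _ (fun i _ => hint i)]
    have h : (fun z => ∑ i, P.f i z) = fun _ => (1:ℝ) := funext P.sum_one
    rw [h]; simp
  have h1 : statEnt μ P ≤ ∑ i, -((∫ z, P.f i z ∂μ) * Real.log (∫ z, P.f i z ∂μ)) := by
    rw [statEnt_eq_sum]
    refine Finset.sum_le_sum (fun i _ => ?_)
    unfold Fent
    have h2 : (∫ z, P.f i z * Real.log (P.f i z) ∂μ) ≤ 0 :=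
      integral_nonpos (fun z => mul_nonpos_of_nonneg_of_nonpos (P.nonneg i z)
        (Real.log_nonpos (P.nonneg i z) (P.le_one i z)))
    linarith
  exact h1.trans (shannon_le_log hn _ (fun i => integral_nonneg (P.nonneg i)) hsum)

end Bounds

section LimsupAux
open Filter

lemma div_mono_nn {x y : ℝ} (n : ℕ) (h : x ≤ y) : x / (n:ℝ) ≤ y / (n:ℝ) := by
  rcases Nat.eq_zero_or_pos n with h0 | h0
  · simp [h0]
  · have : (0:ℝ) < n := by exact_mod_cast h0
    exact div_le_div_of_nonneg_right h this.le

lemma limsup_le_limsup_of_le' {u v : ℕ → ℝ} {C : ℝ} (h : ∀ n, u n ≤ v n)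
    (hu0 : ∀ n, 0 ≤ u n) (hvC : ∀ n, v n ≤ C) :
    Filter.atTop.limsup u ≤ Filter.atTop.limsup v :=
  Filter.limsup_le_limsup (Eventually.of_forall h)
    ((Filter.isBoundedUnder_of ⟨0, hu0⟩).isCoboundedUnder_le)
    (Filter.isBoundedUnder_of ⟨C, hvC⟩)

lemma limsup_add_le' {v w : ℕ → ℝ} {Cv Cw : ℝ} (hv0 : ∀ n, 0 ≤ v n) (hw0 : ∀ n, 0 ≤ w n)
    (hvC : ∀ n, v n ≤ Cv) (hwC : ∀ n, w n ≤ Cw) :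
    Filter.atTop.limsup (v + w) ≤ Filter.atTop.limsup v + Filter.atTop.limsup w :=
  _root_.limsup_add_le (Filter.isBoundedUnder_of ⟨0, hv0⟩)
    (Filter.isBoundedUnder_of ⟨Cv, hvC⟩)
    ((Filter.isBoundedUnder_of ⟨0, hw0⟩).isCoboundedUnder_le)
    (Filter.isBoundedUnder_of ⟨Cw, hwC⟩)

end LimsupAux
/-- Local metric entropy of a product system with respect to a product
partition of unity, compared with the entropies of the marginals. -/
theorem locEnt_prod {X Y : Type*}
    [MetricSpace X] [CompactSpace X] [Nonempty X] [MeasurableSpace X] [BorelSpace X]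
    [MetricSpace Y] [CompactSpace Y] [Nonempty Y] [MeasurableSpace Y] [BorelSpace Y]
    (T : X → X) (hT : Continuous T) (hTsurj : Function.Surjective T)
    (S : Y → Y) (hS : Continuous S) (hSsurj : Function.Surjective S)
    (μ : Measure (X × Y)) [IsProbabilityMeasure μ]
    (hμ : MeasurePreserving (Prod.map T S) μ μ)
    (Φ : PartUnity X) (hΦ : Φ.Cont) (Ψ : PartUnity Y) (hΨ : Ψ.Cont) :
    max (locEnt T (μ.map Prod.fst) Φ) (locEnt S (μ.map Prod.snd) Ψ) ≤
      locEnt (Prod.map T S) μ (Φ.prod Ψ) ∧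
    locEnt (Prod.map T S) μ (Φ.prod Ψ) ≤
      locEnt T (μ.map Prod.fst) Φ + locEnt S (μ.map Prod.snd) Ψ := by
  haveI : IsProbabilityMeasure (μ.map Prod.fst) :=
    Measure.isProbabilityMeasure_map measurable_fst.aemeasurable
  haveI : IsProbabilityMeasure (μ.map Prod.snd) :=
    Measure.isProbabilityMeasure_map measurable_snd.aemeasurable
  -- the three sequences
  set a : ℕ → ℝ := fun n => statEnt (μ.map Prod.fst) (PartUnity.dyn T Φ n) / (n:ℝ) with ha
  set b : ℕ → ℝ := fun n => statEnt (μ.map Prod.snd) (PartUnity.dyn S Ψ n) / (n:ℝ) with hb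
  set e : ℕ → ℝ := fun n => statEnt μ (PartUnity.dyn (Prod.map T S) (Φ.prod Ψ) n) / (n:ℝ)
    with he
  have gA : locEnt T (μ.map Prod.fst) Φ = Filter.atTop.limsup a := rfl
  have gB : locEnt S (μ.map Prod.snd) Ψ = Filter.atTop.limsup b := rfl
  have gE : locEnt (Prod.map T S) μ (Φ.prod Ψ) = Filter.atTop.limsup e := rfl
  -- measurability of dynamical partitions
  have hΦm : ∀ n, (PartUnity.dyn T Φ n).Meas :=
    fun n i => (hΦ.dyn hT n i).measurable
  have hΨm : ∀ n, (PartUnity.dyn S Ψ n).Meas :=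
    fun n i => (hΨ.dyn hS n i).measurable
  -- rewriting the product dynamical partition
  have hE : ∀ n, statEnt μ (PartUnity.dyn (Prod.map T S) (Φ.prod Ψ) n)
      = statEnt μ ((PartUnity.dyn T Φ n).prod (PartUnity.dyn S Ψ n)) :=
    fun n => statEnt_congr μ (PartUnity.dyn_prod_equiv T S Φ Ψ n)
  -- per-n inequalities
  have key1 : ∀ n, a n ≤ e n := fun n => by
    rw [ha, he]
    exact div_mono_nn n (by rw [hE n]; exact statEnt_fst_le (hΦm n) (hΨm n))
  have key2 : ∀ n, b n ≤ e n := fun n => by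
    rw [hb, he]
    exact div_mono_nn n (by rw [hE n]; exact statEnt_snd_le (hΦm n) (hΨm n))
  have key3 : ∀ n, e n ≤ a n + b n := fun n => by
    rw [ha, hb, he]
    dsimp only
    rw [← add_div]
    exact div_mono_nn n (by rw [hE n]; exact statEnt_prod_le (hΦm n) (hΨm n))
  -- nonnegativity
  have ha0 : ∀ n, 0 ≤ a n := fun n =>
    div_nonneg (statEnt_nonneg (hΦm n)) (Nat.cast_nonneg n)
  have hb0 : ∀ n, 0 ≤ b n := fun n =>
    div_nonneg (statEnt_nonneg (hΨm n)) (Nat.cast_nonneg n)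
  have he0 : ∀ n, 0 ≤ e n := fun n => le_trans (ha0 n) (key1 n)
  -- upper bounds
  have hΦ1 : (1:ℝ) ≤ Φ.n := by exact_mod_cast Φ.n_pos
  have hΨ1 : (1:ℝ) ≤ Ψ.n := by exact_mod_cast Ψ.n_pos
  have haC : ∀ n, a n ≤ Real.log Φ.n := by
    intro n
    rcases Nat.eq_zero_or_pos n with h0 | h0
    · rw [ha]; simp [h0]
      exact Real.log_nonneg hΦ1
    · have hle : statEnt (μ.map Prod.fst) (PartUnity.dyn T Φ n) ≤ (n:ℝ) * Real.log Φ.n := by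
        have h := statEnt_le_log (μ := μ.map Prod.fst) (hΦm n)
          (by rw [PartUnity.dyn_n]; exact pow_pos Φ.n_pos n)
        rwa [PartUnity.dyn_n, Nat.cast_pow, Real.log_pow] at h
      have h2 := div_mono_nn n hle
      have hne : (n:ℝ) ≠ 0 := Nat.cast_ne_zero.mpr h0.ne'
      rw [mul_div_cancel_left₀ _ hne] at h2
      rw [ha]
      exact h2
  have hbC : ∀ n, b n ≤ Real.log Ψ.n := by
    intro n
    rcases Nat.eq_zero_or_pos n with h0 | h0
    · rw [hb]; simp [h0]
      exact Real.log_nonneg hΨ1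
    · have hle : statEnt (μ.map Prod.snd) (PartUnity.dyn S Ψ n) ≤ (n:ℝ) * Real.log Ψ.n := by
        have h := statEnt_le_log (μ := μ.map Prod.snd) (hΨm n)
          (by rw [PartUnity.dyn_n]; exact pow_pos Ψ.n_pos n)
        rwa [PartUnity.dyn_n, Nat.cast_pow, Real.log_pow] at h
      have h2 := div_mono_nn n hle
      have hne : (n:ℝ) ≠ 0 := Nat.cast_ne_zero.mpr h0.ne'
      rw [mul_div_cancel_left₀ _ hne] at h2
      rw [hb]
      exact h2
  have heC : ∀ n, e n ≤ Real.log Φ.n + Real.log Ψ.n := fun n =>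
    (key3 n).trans (add_le_add (haC n) (hbC n))
  constructor
  · rw [gA, gB, gE]
    exact max_le (limsup_le_limsup_of_le' key1 ha0 heC)
      (limsup_le_limsup_of_le' key2 hb0 heC)
  · rw [gA, gB, gE]
    calc Filter.atTop.limsup e ≤ Filter.atTop.limsup (a + b) :=
          limsup_le_limsup_of_le' (fun n => key3 n) he0
            (fun n => add_le_add (haC n) (hbC n))
      _ ≤ Filter.atTop.limsup a + Filter.atTop.limsup b :=
          limsup_add_le' ha0 hb0 haC hbC
end

section
/- Let (X,T) be a topological dynamical system. If (Ψ_k)_{k∈ℕ} is a sequence of continuous partitions of unity on X with diam(Ψ_k) → 0 as k → ∞, then for every T-invariant Borel probability measure μ on X, lim_{k→∞} h̃_μ(T,Ψ_k) = h̃_μ(T). -/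
set_option linter.unusedSectionVars false
set_option linter.unusedVariables false


open MeasureTheory Filter Set

/-! ### Metric entropy via partitions of unity -/

variable {X Y : Type*}

namespace EntAux
open Real

/-- Tangent line inequality for `negMulLog` at `v > 0`. -/
lemma tangent_negMulLog {t v : ℝ} (ht : 0 ≤ t) (hv : 0 < v) :
    negMulLog t ≤ negMulLog v - (Real.log v + 1) * (t - v) := by
  rcases eq_or_lt_of_le ht with h | h
  · subst h
    simp [negMulLog]
    nlinarith [hv]
  · have hlog : Real.log (v / t) ≤ v / t - 1 := Real.log_le_sub_one_of_pos (by positivity)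
    have h1 : t * Real.log (v / t) ≤ v - t := by
      have := mul_le_mul_of_nonneg_left hlog (le_of_lt h)
      calc t * Real.log (v/t) ≤ t * (v/t - 1) := this
        _ = v - t := by field_simp
    have h2 : Real.log (v / t) = Real.log v - Real.log t := Real.log_div (ne_of_gt hv) (ne_of_gt h)
    simp only [negMulLog]
    nlinarith [h1, h2]

/-- Log-sum inequality. -/
lemma log_sum_ineq {ι : Type*} [Fintype ι] (a b : ι → ℝ) (h0 : ∀ i, 0 ≤ a i)
    (hab : ∀ i, a i ≤ b i) :
    (∑ i, a i) * Real.log ((∑ i, a i) / (∑ i, b i)) ≤ ∑ i, a i * Real.log (a i / b i) := by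
  set A := ∑ i, a i with hA
  set B := ∑ i, b i with hB
  rcases eq_or_lt_of_le (Finset.sum_nonneg fun i _ => h0 i) with h | hApos
  · have hz : ∀ i, a i = 0 := by
      intro i
      exact (Finset.sum_eq_zero_iff_of_nonneg (fun i _ => h0 i)).mp h.symm i (Finset.mem_univ i)
    have hA0 : A = 0 := h.symm
    rw [hA0]
    simp [hz]
  · have hBpos : 0 < B := lt_of_lt_of_le hApos (Finset.sum_le_sum fun i _ => hab i)
    have key : ∀ i, a i * Real.log (A / B) + (a i - b i * (A / B)) ≤ a i * Real.log (a i / b i) := by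
      intro i
      rcases eq_or_lt_of_le (h0 i) with h | hai
      · have hbi : 0 ≤ b i := le_trans (h0 i) (hab i)
        simp [← h]
        positivity
      · have hbi : 0 < b i := lt_of_lt_of_le hai (hab i)
        have hu : 0 < A * b i / (B * a i) := by positivity
        have hlog : Real.log (A * b i / (B * a i)) ≤ A * b i / (B * a i) - 1 :=
          Real.log_le_sub_one_of_pos hu
        have e1 : Real.log (A / B) - Real.log (a i / b i) = Real.log (A * b i / (B * a i)) := by
          rw [Real.log_div (ne_of_gt hApos) (ne_of_gt hBpos),
            Real.log_div (ne_of_gt hai) (ne_of_gt hbi),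
            Real.log_div (by positivity) (by positivity),
            Real.log_mul (ne_of_gt hApos) (ne_of_gt hbi),
            Real.log_mul (ne_of_gt hBpos) (ne_of_gt hai)]
          ring
        have hmul := mul_le_mul_of_nonneg_left hlog (le_of_lt hai)
        have e2 : a i * (A * b i / (B * a i) - 1) = b i * (A/B) - a i := by
          field_simp
        nlinarith [hmul, e1, e2]
    have hsum : ∑ i, (a i * Real.log (A / B) + (a i - b i * (A / B))) ≤
        ∑ i, a i * Real.log (a i / b i) := Finset.sum_le_sum (fun i _ => key i)
    have e3 : ∑ i, (a i * Real.log (A / B) + (a i - b i * (A / B))) = A * Real.log (A/B) := by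
      rw [Finset.sum_add_distrib, ← Finset.sum_mul, Finset.sum_sub_distrib, ← Finset.sum_mul]
      rw [← hA, ← hB]
      field_simp
      ring
    linarith [hsum, e3.symm.le]

lemma negMulLog_le_one_sub {t : ℝ} (ht : 0 ≤ t) : negMulLog t ≤ 1 - t := by
  rcases eq_or_lt_of_le ht with h | h
  · simp [← h]
  · have h2 : 1 - 1/t ≤ Real.log t := by
      have := Real.log_le_sub_one_of_pos (x := 1/t) (by positivity)
      rw [Real.log_div one_ne_zero (ne_of_gt h)] at this
      simp only [Real.log_one, zero_sub] at this
      have ht' : (1:ℝ)/t = t⁻¹ := one_div t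
      linarith [this]
    have hmul := mul_le_mul_of_nonneg_left h2 (le_of_lt h)
    have he : t * (1 - 1/t) = t - 1 := by field_simp
    simp only [negMulLog]
    nlinarith [hmul, he]

/-- Decomposition: `Σ nml a - Σ nml b = - Σ a log(a/b)` when `b k = Σ_i a i k`. -/
lemma nml_decomp {ι κ : Type*} [Fintype ι] [Fintype κ] (a : ι → κ → ℝ) (b : κ → ℝ)
    (h0 : ∀ i k, 0 ≤ a i k) (hb : ∀ k, ∑ i, a i k = b k) :
    (∑ k, ∑ i, negMulLog (a i k)) - ∑ k, negMulLog (b k)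
      = -∑ k, ∑ i, a i k * Real.log (a i k / b k) := by
  have key : ∀ k, ∑ i, a i k * Real.log (a i k / b k)
      = -(∑ i, negMulLog (a i k)) + negMulLog (b k) := by
    intro k
    have hbk : 0 ≤ b k := (hb k) ▸ Finset.sum_nonneg (fun i _ => h0 i k)
    have hterm : ∀ i, a i k * Real.log (a i k / b k)
        = -negMulLog (a i k) - a i k * Real.log (b k) := by
      intro i
      rcases eq_or_lt_of_le (h0 i k) with h | h
      · simp [← h, negMulLog]
      · have hbpos : 0 < b k := by
          rw [← hb k]
          exact lt_of_lt_of_le h (Finset.single_le_sum (fun j _ => h0 j k) (Finset.mem_univ i))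
        rw [Real.log_div (ne_of_gt h) (ne_of_gt hbpos)]
        simp only [negMulLog]
        ring
    rw [Finset.sum_congr rfl (fun i _ => hterm i), Finset.sum_sub_distrib, ← Finset.sum_mul,
      hb k]
    simp only [negMulLog, neg_mul, Finset.sum_neg_distrib, neg_neg]
    ring
  rw [Finset.sum_congr rfl (fun k _ => key k), Finset.sum_add_distrib]
  simp only [Finset.sum_neg_distrib]
  ring

/-- Refinement inequality derived from log-sum. -/
lemma refine_ineq {ι κ γ : Type*} [Fintype ι] [Fintype κ] [Fintype γ]
    (x : ι → κ → γ → ℝ) (y : κ → γ → ℝ) (Xf : ι → γ → ℝ) (Yf : γ → ℝ)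
    (h0 : ∀ i j k, 0 ≤ x i j k)
    (hy : ∀ j k, ∑ i, x i j k = y j k)
    (hX : ∀ i k, ∑ j, x i j k = Xf i k)
    (hY : ∀ k, ∑ j, y j k = Yf k) :
    (∑ k, ∑ j, ∑ i, negMulLog (x i j k)) - (∑ k, ∑ j, negMulLog (y j k))
      ≤ (∑ k, ∑ i, negMulLog (Xf i k)) - ∑ k, negMulLog (Yf k) := by
  have hYs : ∀ k, ∑ i, Xf i k = Yf k := by
    intro k
    rw [← hY k]
    rw [Finset.sum_congr rfl (fun i _ => (hX i k).symm),
      Finset.sum_congr rfl (fun j _ => (hy j k).symm), Finset.sum_comm]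
  have hXnn : ∀ i k, 0 ≤ Xf i k := by
    intro i k; rw [← hX i k]; exact Finset.sum_nonneg fun j _ => h0 i j k
  -- log-sum per (i,k)
  have hls : ∀ i k, Xf i k * Real.log (Xf i k / Yf k)
      ≤ ∑ j, x i j k * Real.log (x i j k / y j k) := by
    intro i k
    have h1 : ∀ j, x i j k ≤ y j k := by
      intro j
      rw [← hy j k]
      exact Finset.single_le_sum (fun i' _ => h0 i' j k) (Finset.mem_univ i)
    have := log_sum_ineq (fun j => x i j k) (fun j => y j k) (fun j => h0 i j k) h1
    rwa [hX i k, hY k] at this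
  -- decompositions
  have d1 := nml_decomp (ι := ι) (κ := κ × γ) (fun i p => x i p.1 p.2) (fun p => y p.1 p.2)
    (fun i p => h0 i p.1 p.2) (fun p => hy p.1 p.2)
  have d2 := nml_decomp (ι := ι) (κ := γ) Xf Yf hXnn hYs
  simp only [Fintype.sum_prod_type] at d1
  -- d1 : Σ_j Σ_k Σ_i nml x - Σ_j Σ_k nml y = - Σ_j Σ_k Σ_i x log(x/y) (indices (j,k))
  have hsum : ∑ k, ∑ i, Xf i k * Real.log (Xf i k / Yf k)
      ≤ ∑ k, ∑ i, ∑ j, x i j k * Real.log (x i j k / y j k) :=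
    Finset.sum_le_sum fun k _ => Finset.sum_le_sum fun i _ => hls i k
  -- rearrange sums
  have e1 : ∑ j, ∑ k, ∑ i, x i j k * Real.log (x i j k / y j k)
      = ∑ k, ∑ i, ∑ j, x i j k * Real.log (x i j k / y j k) := by
    rw [Finset.sum_comm]
    exact Finset.sum_congr rfl fun k _ => Finset.sum_comm
  have e2 : ∑ j, ∑ k, ∑ i, negMulLog (x i j k) = ∑ k, ∑ j, ∑ i, negMulLog (x i j k) :=
    Finset.sum_comm
  have e3 : ∑ j, ∑ k, negMulLog (y j k) = ∑ k, ∑ j, negMulLog (y j k) := Finset.sum_comm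
  rw [e1, e2, e3] at d1
  linarith [hsum, d1, d2]

variable {X : Type*} [MetricSpace X] [CompactSpace X] [MeasurableSpace X] [BorelSpace X]
variable (μ : Measure X) [IsProbabilityMeasure μ]

lemma cint {g : X → ℝ} (hg : Continuous g) : Integrable g μ := by
  have := hg.continuousOn.integrableOn_compact (isCompact_univ (X := X)) (μ := μ)
  rwa [integrableOn_univ] at this

/-- Jensen via tangent line. -/
lemma jensen_core {ψ φ : X → ℝ} (hψ : Continuous ψ) (hψ0 : ∀ x, 0 ≤ ψ x)
    (hφ : Continuous φ) (hφ0 : ∀ x, 0 ≤ φ x) :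
    ∫ x, ψ x * negMulLog (φ x) ∂μ ≤
      (∫ x, ψ x ∂μ) * negMulLog ((∫ x, φ x * ψ x ∂μ) / (∫ x, ψ x ∂μ)) := by
  set B := ∫ x, ψ x ∂μ with hB
  set A := ∫ x, φ x * ψ x ∂μ with hA'
  have hφψc : Continuous (fun x => φ x * ψ x) := hφ.mul hψ
  have hA0 : 0 ≤ A := integral_nonneg fun x => mul_nonneg (hφ0 x) (hψ0 x)
  have hB0 : 0 ≤ B := integral_nonneg hψ0
  rcases eq_or_lt_of_le hA0 with h | hApos
  · have hae : (fun x => φ x * ψ x) =ᵐ[μ] 0 :=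
      (integral_eq_zero_iff_of_nonneg (fun x => mul_nonneg (hφ0 x) (hψ0 x)) (cint μ hφψc)).mp h.symm
    have hae2 : (fun x => ψ x * negMulLog (φ x)) =ᵐ[μ] 0 := by
      filter_upwards [hae] with x hx
      simp only [Pi.zero_apply] at hx ⊢
      rcases mul_eq_zero.mp hx with h1 | h2
      · simp [h1]
      · simp [h2]
    rw [integral_congr_ae hae2]
    simp [← h]
  · have hBpos : 0 < B := by
      rcases eq_or_lt_of_le hB0 with h | h
      · exfalso
        have hae : ψ =ᵐ[μ] 0 :=
          (integral_eq_zero_iff_of_nonneg hψ0 (cint μ hψ)).mp h.symm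
        have h2 : (fun x => φ x * ψ x) =ᵐ[μ] 0 := by
          filter_upwards [hae] with x hx; simp [hx]
        rw [hA', integral_congr_ae h2] at hApos
        simp at hApos
      · exact h
    set v := A / B with hv
    have hvpos : 0 < v := div_pos hApos hBpos
    have hpt : ∀ x, ψ x * negMulLog (φ x) ≤
        ψ x * (negMulLog v - (Real.log v + 1) * (φ x - v)) := fun x =>
      mul_le_mul_of_nonneg_left (tangent_negMulLog (hφ0 x) hvpos) (hψ0 x)
    have hint : ∫ x, ψ x * negMulLog (φ x) ∂μ ≤
        ∫ x, ψ x * (negMulLog v - (Real.log v + 1) * (φ x - v)) ∂μ :=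
      integral_mono (cint μ (hψ.mul (Real.continuous_negMulLog.comp hφ)))
        (cint μ (hψ.mul (by continuity))) hpt
    have heval : ∫ x, ψ x * (negMulLog v - (Real.log v + 1) * (φ x - v)) ∂μ
        = B * negMulLog v := by
      have e0 : (fun x => ψ x * (negMulLog v - (Real.log v + 1) * (φ x - v))) =
          (fun x => (negMulLog v + (Real.log v + 1) * v) * ψ x
            - (Real.log v + 1) * (φ x * ψ x)) := by
        funext x; ring
      rw [e0, integral_sub ((cint μ hψ).const_mul _) ((cint μ hφψc).const_mul _),
        integral_const_mul, integral_const_mul, ← hB, ← hA']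
      have hvB : v * B = A := by
        rw [hv]; field_simp
      linear_combination (Real.log v + 1) * hvB
    calc ∫ x, ψ x * negMulLog (φ x) ∂μ ≤ B * negMulLog v := heval ▸ hint
      _ = B * negMulLog (A / B) := by rw [hv]

section Core
variable {ι κ γ : Type*} [Fintype ι] [Fintype κ] [Fintype γ]

/-- Join of two families. -/
def jf (f : ι → X → ℝ) (g : κ → X → ℝ) : ι × κ → X → ℝ := fun p x => f p.1 x * g p.2 x

/-- Family version of a continuous partition of unity. -/
structure IsPU (f : ι → X → ℝ) : Prop where
  cont : ∀ i, Continuous (f i)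
  nn : ∀ i x, 0 ≤ f i x
  le1 : ∀ i x, f i x ≤ 1
  sum1 : ∀ x, ∑ i, f i x = 1

lemma IsPU.jf {f : ι → X → ℝ} {g : κ → X → ℝ} (hf : IsPU f) (hg : IsPU g) :
    IsPU (EntAux.jf f g) where
  cont p := (hf.cont p.1).mul (hg.cont p.2)
  nn p x := mul_nonneg (hf.nn p.1 x) (hg.nn p.2 x)
  le1 p x := mul_le_one₀ (hf.le1 p.1 x) (hg.nn p.2 x) (hg.le1 p.2 x)
  sum1 x := by
    rw [Fintype.sum_prod_type]
    simp only [EntAux.jf]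
    rw [← Finset.sum_mul_sum, hf.sum1 x, hg.sum1 x, one_mul]

lemma IsPU.compT {f : ι → X → ℝ} (hf : IsPU f) {T : X → X} (hT : Continuous T) :
    IsPU (fun i x => f i (T x)) where
  cont i := (hf.cont i).comp hT
  nn i x := hf.nn i (T x)
  le1 i x := hf.le1 i (T x)
  sum1 x := hf.sum1 (T x)

/-- `ee μ g = negMulLog (μ g) - μ (negMulLog g)`. -/
noncomputable def ee (g : X → ℝ) : ℝ :=
  negMulLog (∫ x, g x ∂μ) - ∫ x, negMulLog (g x) ∂μ

/-- Family static entropy. -/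
noncomputable def SG (f : ι → X → ℝ) : ℝ := ∑ i, ee μ (f i)

/-- Family conditional static entropy (explicit formula). -/
noncomputable def hcG (f : ι → X → ℝ) (g : κ → X → ℝ) : ℝ :=
  ∑ j, ∑ i, ((∫ x, g j x ∂μ) * negMulLog ((∫ x, f i x * g j x ∂μ) / (∫ x, g j x ∂μ))
    - ∫ x, g j x * negMulLog (f i x) ∂μ)

variable {μ}

lemma cont_nml {g : X → ℝ} (hg : Continuous g) : Continuous fun x => negMulLog (g x) :=
  continuous_negMulLog.comp hg

lemma ee_congr {g g' : X → ℝ} (h : ∀ x, g x = g' x) : ee μ g = ee μ g' := by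
  have : g = g' := funext h
  rw [this]

lemma ee_nonneg {g : X → ℝ} (hg : Continuous g) (hg0 : ∀ x, 0 ≤ g x) : 0 ≤ ee μ g := by
  have := jensen_core μ (continuous_const (y := (1:ℝ))) (fun _ => zero_le_one) hg hg0
  simp only [integral_const, measure_univ, probReal_univ, smul_eq_mul, one_mul,
    mul_one, div_one] at this
  simp only [ee]
  linarith [this]

lemma A_nonneg {f g : X → ℝ} (hf0 : ∀ x, 0 ≤ f x) (hg0 : ∀ x, 0 ≤ g x) :
    0 ≤ ∫ x, f x * g x ∂μ := integral_nonneg fun x => mul_nonneg (hf0 x) (hg0 x)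

lemma A_le_B {f g : X → ℝ} (hf : Continuous f) (hg : Continuous g)
    (hf0 : ∀ x, 0 ≤ f x) (hf1 : ∀ x, f x ≤ 1) (hg0 : ∀ x, 0 ≤ g x) :
    ∫ x, f x * g x ∂μ ≤ ∫ x, g x ∂μ := by
  refine integral_mono (cint μ (hf.mul hg)) (cint μ hg) fun x => ?_
  calc f x * g x ≤ 1 * g x := mul_le_mul_of_nonneg_right (hf1 x) (hg0 x)
    _ = g x := one_mul _

/-- Row sums of the joint integrals. -/
lemma sum_A_eq_B {f : ι → X → ℝ} {g : X → ℝ} (hf : IsPU f) (hg : Continuous g) :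
    ∑ i, ∫ x, f i x * g x ∂μ = ∫ x, g x ∂μ := by
  rw [← integral_finset_sum _ (fun i _ => (cint μ ((hf.cont i).mul hg) : Integrable (fun x => f i x * g x) μ))]
  congr 1
  funext x
  rw [← Finset.sum_mul, hf.sum1 x, one_mul]

lemma hcG_alt {f : ι → X → ℝ} {g : κ → X → ℝ} (hf : IsPU f) (hg : IsPU g) :
    hcG μ f g = ((∑ j, ∑ i, negMulLog (∫ x, f i x * g j x ∂μ))
      - ∑ j, negMulLog (∫ x, g j x ∂μ))
      - ∑ j, ∑ i, ∫ x, g j x * negMulLog (f i x) ∂μ := by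
  have key : ∀ j, ∑ i, (∫ x, g j x ∂μ) *
      negMulLog ((∫ x, f i x * g j x ∂μ) / (∫ x, g j x ∂μ))
      = (∑ i, negMulLog (∫ x, f i x * g j x ∂μ)) - negMulLog (∫ x, g j x ∂μ) := by
    intro j
    set B := ∫ x, g j x ∂μ with hB
    have hB0 : 0 ≤ B := integral_nonneg (hg.nn j)
    rcases eq_or_lt_of_le hB0 with h | hBpos
    · have hA0 : ∀ i, ∫ x, f i x * g j x ∂μ = 0 := fun i =>
        le_antisymm (le_trans (A_le_B (hf.cont i) (hg.cont j) (hf.nn i) (hf.le1 i) (hg.nn j))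
          h.ge) (A_nonneg (hf.nn i) (hg.nn j))
      simp [← h, hA0]
    · have hterm : ∀ i, B * negMulLog ((∫ x, f i x * g j x ∂μ) / B)
          = negMulLog (∫ x, f i x * g j x ∂μ) + (∫ x, f i x * g j x ∂μ) * Real.log B := by
        intro i
        set A := ∫ x, f i x * g j x ∂μ with hA
        have hA0 : 0 ≤ A := A_nonneg (hf.nn i) (hg.nn j)
        rcases eq_or_lt_of_le hA0 with h | hApos
        · simp [← h]
        · rw [negMulLog, negMulLog, Real.log_div (ne_of_gt hApos) (ne_of_gt hBpos)]
          field_simp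
          ring
      rw [Finset.sum_congr rfl fun i _ => hterm i, Finset.sum_add_distrib, ← Finset.sum_mul,
        sum_A_eq_B hf (hg.cont j), ← hB, negMulLog]
      ring
  simp only [hcG, Finset.sum_sub_distrib]
  rw [Finset.sum_congr rfl fun j _ => key j, Finset.sum_sub_distrib]

/-- Expansion of `SG` of a join. -/
lemma SG_jf_eq {f : ι → X → ℝ} {g : κ → X → ℝ} (hf : IsPU f) (hg : IsPU g) :
    SG μ (jf f g) = ((∑ j, ∑ i, negMulLog (∫ x, f i x * g j x ∂μ))
      - ∑ j, ∑ i, ∫ x, g j x * negMulLog (f i x) ∂μ)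
      - ∑ j, ∫ x, negMulLog (g j x) ∂μ := by
  have hterm : ∀ (i : ι) (j : κ), ee μ (fun x => f i x * g j x)
      = negMulLog (∫ x, f i x * g j x ∂μ) - ∫ x, g j x * negMulLog (f i x) ∂μ
        - ∫ x, f i x * negMulLog (g j x) ∂μ := by
    intro i j
    have e1 : (fun x => negMulLog (f i x * g j x))
        = fun x => g j x * negMulLog (f i x) + f i x * negMulLog (g j x) := by
      funext x; exact negMulLog_mul _ _
    rw [ee, e1, integral_add (cint μ ((hg.cont j).mul (cont_nml (hf.cont i))) : Integrable (fun x => g j x * negMulLog (f i x)) μ)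
      (cint μ ((hf.cont i).mul (cont_nml (hg.cont j))) : Integrable (fun x => f i x * negMulLog (g j x)) μ)]
    ring
  have e2 : ∀ j, ∑ i, ∫ x, f i x * negMulLog (g j x) ∂μ = ∫ x, negMulLog (g j x) ∂μ := by
    intro j
    rw [← integral_finset_sum _ (fun i _ => (cint μ ((hf.cont i).mul (cont_nml (hg.cont j))) : Integrable (fun x => f i x * negMulLog (g j x)) μ))]
    congr 1
    funext x
    rw [← Finset.sum_mul, hf.sum1 x, one_mul]
  have e0 : SG μ (jf f g) = ∑ i : ι, ∑ j : κ, ee μ (fun x => f i x * g j x) := by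
    simp only [SG]
    rw [Fintype.sum_prod_type]
    rfl
  rw [e0]
  rw [Finset.sum_congr rfl fun i (_ : i ∈ Finset.univ) =>
    Finset.sum_congr rfl fun j (_ : j ∈ Finset.univ) => hterm i j]
  rw [Finset.sum_comm]
  simp only [Finset.sum_sub_distrib]
  rw [Finset.sum_congr rfl fun j (_ : j ∈ Finset.univ) => e2 j]

/-- Chain rule. -/
lemma SG_chain {f : ι → X → ℝ} {g : κ → X → ℝ} (hf : IsPU f) (hg : IsPU g) :
    SG μ (jf f g) = SG μ g + hcG μ f g := by
  rw [SG_jf_eq hf hg, hcG_alt hf hg, SG]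
  simp only [ee]
  rw [Finset.sum_sub_distrib]
  ring

lemma hcG_nonneg {f : ι → X → ℝ} {g : κ → X → ℝ} (hf : IsPU f) (hg : IsPU g) :
    0 ≤ hcG μ f g := by
  refine Finset.sum_nonneg fun j _ => Finset.sum_nonneg fun i _ => ?_
  have := jensen_core μ (hg.cont j) (hg.nn j) (hf.cont i) (hf.nn i)
  linarith [this]

lemma SG_nonneg {f : ι → X → ℝ} (hf : IsPU f) : 0 ≤ SG μ f :=
  Finset.sum_nonneg fun i _ => ee_nonneg (hf.cont i) (hf.nn i)

/-- Expansion of a join sum. -/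
lemma SG_jf_expand (f : ι → X → ℝ) (g : κ → X → ℝ) :
    SG μ (jf f g) = ∑ i : ι, ∑ j : κ, ee μ (fun x => f i x * g j x) := by
  simp only [SG]
  rw [Fintype.sum_prod_type]
  rfl

lemma SG_jf_comm (f : ι → X → ℝ) (g : κ → X → ℝ) :
    SG μ (jf f g) = SG μ (jf g f) := by
  rw [SG_jf_expand, SG_jf_expand, Finset.sum_comm]
  exact Finset.sum_congr rfl fun j _ => Finset.sum_congr rfl fun i _ =>
    ee_congr fun x => mul_comm _ _

lemma SG_jf3_left (f : ι → X → ℝ) (g : κ → X → ℝ) (h : γ → X → ℝ) :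
    SG μ (jf (jf f g) h)
      = ∑ i : ι, ∑ j : κ, ∑ k : γ, ee μ (fun x => f i x * g j x * h k x) := by
  rw [SG_jf_expand]
  rw [Fintype.sum_prod_type]
  rfl

lemma SG_jf3_right (f : ι → X → ℝ) (g : κ → X → ℝ) (h : γ → X → ℝ) :
    SG μ (jf f (jf g h))
      = ∑ i : ι, ∑ j : κ, ∑ k : γ, ee μ (fun x => f i x * (g j x * h k x)) := by
  rw [SG_jf_expand]
  refine Finset.sum_congr rfl fun i _ => ?_
  rw [Fintype.sum_prod_type]
  rfl

lemma SG_jf_assoc (f : ι → X → ℝ) (g : κ → X → ℝ) (h : γ → X → ℝ) :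
    SG μ (jf (jf f g) h) = SG μ (jf f (jf g h)) := by
  rw [SG_jf3_left, SG_jf3_right]
  exact Finset.sum_congr rfl fun i _ => Finset.sum_congr rfl fun j _ =>
    Finset.sum_congr rfl fun k _ => ee_congr fun x => mul_assoc _ _ _

lemma SG_le_jf {g : κ → X → ℝ} {h : γ → X → ℝ} (hg : IsPU g) (hh : IsPU h) :
    SG μ h ≤ SG μ (jf g h) := by
  rw [SG_chain hg hh]
  linarith [hcG_nonneg (μ := μ) hg hh]

/-- `∑ j ∫ g j · u = ∫ u` for a partition of unity `g`. -/
lemma sum_mul_int {g : κ → X → ℝ} {u : X → ℝ} (hg : IsPU g) (hu : Continuous u) :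
    ∑ j, ∫ x, g j x * u x ∂μ = ∫ x, u x ∂μ := by
  rw [← integral_finset_sum _ (fun j _ => (cint μ ((hg.cont j).mul hu) : Integrable (fun x => g j x * u x) μ))]
  congr 1
  funext x
  rw [← Finset.sum_mul, hg.sum1 x, one_mul]

/-- Monotonicity: conditioning on a finer partition decreases `hcG`. -/
lemma hcG_mono_left {f : ι → X → ℝ} {g : κ → X → ℝ} {h : γ → X → ℝ}
    (hf : IsPU f) (hg : IsPU g) (hh : IsPU h) :
    hcG μ f (jf g h) ≤ hcG μ f h := by
  rw [hcG_alt hf (hg.jf hh), hcG_alt hf hh]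
  -- the `negMulLog ∘ f` sums agree
  have t1 : ∑ (p : κ × γ), ∑ i, ∫ x, jf g h p x * negMulLog (f i x) ∂μ
      = ∑ i, ∫ x, negMulLog (f i x) ∂μ := by
    rw [Finset.sum_comm]
    refine Finset.sum_congr rfl fun i _ => ?_
    exact sum_mul_int (hg.jf hh) (cont_nml (hf.cont i))
  have t2 : ∑ k, ∑ i, ∫ x, h k x * negMulLog (f i x) ∂μ
      = ∑ i, ∫ x, negMulLog (f i x) ∂μ := by
    rw [Finset.sum_comm]
    exact Finset.sum_congr rfl fun i _ => sum_mul_int hh (cont_nml (hf.cont i))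
  rw [t1, t2]
  -- main refinement inequality
  have main := refine_ineq (fun i j k => ∫ x, f i x * (g j x * h k x) ∂μ)
    (fun j k => ∫ x, g j x * h k x ∂μ) (fun i k => ∫ x, f i x * h k x ∂μ)
    (fun k => ∫ x, h k x ∂μ)
    (fun i j k => A_nonneg (hf.nn i) (fun x => mul_nonneg (hg.nn j x) (hh.nn k x)))
    (fun j k => sum_A_eq_B hf ((hg.cont j).mul (hh.cont k)))
    (fun i k => by
      rw [← integral_finset_sum _ (fun j _ => (cint μ ((hf.cont i).mul
        ((hg.cont j).mul (hh.cont k))) : Integrable (fun x => f i x * (g j x * h k x)) μ))]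
      congr 1
      funext x
      rw [← Finset.mul_sum, ← Finset.sum_mul, hg.sum1 x, one_mul])
    (fun k => sum_A_eq_B hg (hh.cont k))
  -- reorder product sums
  have r1 : ∑ (p : κ × γ), ∑ i, negMulLog (∫ x, f i x * jf g h p x ∂μ)
      = ∑ k, ∑ j, ∑ i, negMulLog (∫ x, f i x * (g j x * h k x) ∂μ) := by
    rw [Fintype.sum_prod_type]
    exact Finset.sum_comm
  have r2 : ∑ (p : κ × γ), negMulLog (∫ x, jf g h p x ∂μ)
      = ∑ k, ∑ j, negMulLog (∫ x, g j x * h k x ∂μ) := by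
    rw [Fintype.sum_prod_type]
    exact Finset.sum_comm
  have r3 : ∑ k, ∑ i, negMulLog (∫ x, f i x * h k x ∂μ)
      = ∑ (k : γ), ∑ i, negMulLog (∫ x, f i x * h k x ∂μ) := rfl
  rw [r1, r2]
  linarith [main]

lemma hcG_snd_comm (f : ι → X → ℝ) (g : κ → X → ℝ) (h : γ → X → ℝ) :
    hcG μ f (jf g h) = hcG μ f (jf h g) := by
  simp only [hcG]
  refine Fintype.sum_equiv (Equiv.prodComm κ γ) _ _ fun p => ?_
  refine Finset.sum_congr rfl fun i _ => ?_
  have e1 : jf g h p = jf h g (Equiv.prodComm κ γ p) := funext fun x => mul_comm _ _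
  rw [e1]

section Invariance
variable {T : X → X}

lemma int_compT (hμT : MeasurePreserving T μ μ) {u : X → ℝ} (hu : Continuous u) :
    ∫ x, u (T x) ∂μ = ∫ x, u x ∂μ := by
  conv_rhs => rw [← hμT.map_eq]
  rw [integral_map hμT.measurable.aemeasurable hu.aestronglyMeasurable]

lemma hcG_compT (hμT : MeasurePreserving T μ μ) {f : ι → X → ℝ} {g : κ → X → ℝ}
    (hf : IsPU f) (hg : IsPU g) :
    hcG μ (fun i x => f i (T x)) (fun j x => g j (T x)) = hcG μ f g := by
  simp only [hcG]
  refine Finset.sum_congr rfl fun j _ => Finset.sum_congr rfl fun i _ => ?_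
  have i1 : ∫ x, g j (T x) ∂μ = ∫ x, g j x ∂μ := int_compT hμT (hg.cont j)
  have i2 : ∫ x, f i (T x) * g j (T x) ∂μ = ∫ x, f i x * g j x ∂μ :=
    int_compT hμT ((hf.cont i).mul (hg.cont j))
  have i3 : ∫ x, g j (T x) * negMulLog (f i (T x)) ∂μ
      = ∫ x, g j x * negMulLog (f i x) ∂μ :=
    int_compT hμT ((hg.cont j).mul (cont_nml (hf.cont i)))
  rw [i1, i2, i3]

end Invariance

/-- The basic entropy bound `SG ≤ log card`. -/
lemma SG_le_log [Nonempty X] {f : ι → X → ℝ} (hf : IsPU f) :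
    SG μ f ≤ Real.log (Fintype.card ι) := by
  have x0 : X := Classical.arbitrary X
  have hcard : 0 < Fintype.card ι := by
    rcases isEmpty_or_nonempty ι with hι | hι
    · exfalso
      have := hf.sum1 x0
      simp [Finset.univ_eq_empty] at this
    · exact Fintype.card_pos
  have hsum1 : ∑ i, ∫ x, f i x ∂μ = 1 := by
    rw [← integral_finset_sum _ (fun i _ => cint μ (hf.cont i))]
    have : ∀ x, ∑ i, f i x = (1:ℝ) := hf.sum1
    rw [show (fun x => ∑ i, f i x) = (fun _ => (1:ℝ)) from funext this]
    simp
  have hple : ∀ i, ∫ x, f i x ∂μ ≤ 1 := by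
    intro i
    have h1 : ∫ x, f i x ∂μ ≤ ∫ _x, (1:ℝ) ∂μ :=
      integral_mono (cint μ (hf.cont i)) (integrable_const 1) (hf.le1 i)
    simpa using h1
  have h0 : ∀ i, 0 ≤ ∫ x, f i x ∂μ := fun i => integral_nonneg (hf.nn i)
  have hls := log_sum_ineq (fun i => ∫ x, f i x ∂μ) (fun _ => (1:ℝ)) h0 hple
  rw [hsum1] at hls
  simp only [Finset.sum_const, Finset.card_univ, nsmul_eq_mul, mul_one, one_mul, div_one] at hls
  -- hls : log (1 / card) ≤ ∑ i, p i * log (p i)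
  have hlog : Real.log (1 / (Fintype.card ι : ℝ)) = -Real.log (Fintype.card ι) := by
    rw [one_div, Real.log_inv]
  rw [hlog] at hls
  have hSG : SG μ f ≤ ∑ i, negMulLog (∫ x, f i x ∂μ) := by
    refine Finset.sum_le_sum fun i _ => ?_
    have : 0 ≤ ∫ x, negMulLog (f i x) ∂μ :=
      integral_nonneg fun x => negMulLog_nonneg (hf.nn i x) (hf.le1 i x)
    simp only [ee]
    linarith
  have : ∑ i, negMulLog (∫ x, f i x ∂μ) = -∑ i, (∫ x, f i x ∂μ) * Real.log (∫ x, f i x ∂μ) := by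
    simp only [negMulLog, neg_mul, Finset.sum_neg_distrib]
  linarith [hSG, hls, this.le, this.ge]

end Core
end EntAux

namespace EntAux
open Real
section Bridge
variable {X : Type*} [MetricSpace X] [CompactSpace X] [MeasurableSpace X] [BorelSpace X]
variable {μ : Measure X} [IsProbabilityMeasure μ] {T : X → X}

lemma isPU_of {Θ : PartUnity X} (h : Θ.Cont) : IsPU Θ.f :=
  ⟨h, Θ.nonneg, Θ.le_one, Θ.sum_one⟩

lemma n_pos [Nonempty X] (Θ : PartUnity X) : 0 < Θ.n := by
  by_contra h
  push_neg at h
  have hn : Θ.n = 0 := Nat.le_zero.mp h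
  have h1 := Θ.sum_one (Classical.arbitrary X)
  have h2 : ∑ i : Fin Θ.n, Θ.f i (Classical.arbitrary X) = 0 :=
    Finset.sum_eq_zero fun i _ => absurd i.2 (by omega)
  rw [h1] at h2
  norm_num at h2

lemma statEnt_eq_SG (Θ : PartUnity X) : statEnt μ Θ = SG μ Θ.f := by
  simp only [statEnt, SG, ee]
  refine Finset.sum_congr rfl fun i _ => ?_
  have e1 : ∫ x, Θ.f i x * Real.log (Θ.f i x) ∂μ = -∫ x, negMulLog (Θ.f i x) ∂μ := by
    rw [← integral_neg]
    congr 1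
    funext x
    simp only [negMulLog, neg_mul, neg_neg]
  rw [e1]
  simp only [negMulLog, neg_mul]
  ring

lemma join_f_eq (A B : PartUnity X) (p : Fin A.n × Fin B.n) :
    (A.join B).f (finProdFinEquiv p) = jf A.f B.f p := by
  funext x
  show A.f (finProdFinEquiv.symm (finProdFinEquiv p)).1 x
    * B.f (finProdFinEquiv.symm (finProdFinEquiv p)).2 x = _
  rw [Equiv.symm_apply_apply]
  rfl

lemma SG_congr {ι ι' : Type*} [Fintype ι] [Fintype ι'] {f : ι → X → ℝ} {f' : ι' → X → ℝ}
    (e : ι ≃ ι') (hf : ∀ i, f' (e i) = f i) : SG μ f = SG μ f' := by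
  simp only [SG]
  exact Fintype.sum_equiv e _ _ fun i => by rw [hf i]

lemma hcG_congr {ι ι' κ κ' : Type*} [Fintype ι] [Fintype ι'] [Fintype κ] [Fintype κ']
    {f : ι → X → ℝ} {f' : ι' → X → ℝ} {g : κ → X → ℝ} {g' : κ' → X → ℝ}
    (e : ι ≃ ι') (e' : κ ≃ κ') (hf : ∀ i, f' (e i) = f i) (hg : ∀ j, g' (e' j) = g j) :
    hcG μ f g = hcG μ f' g' := by
  simp only [hcG]
  refine Fintype.sum_equiv e' _ _ fun j => ?_
  refine Fintype.sum_equiv e _ _ fun i => ?_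
  rw [hf i, hg j]

lemma SG_join_f (A B : PartUnity X) : SG μ (A.join B).f = SG μ (jf A.f B.f) :=
  (SG_congr finProdFinEquiv (join_f_eq A B)).symm

lemma hcG_join_join (A A' B B' : PartUnity X) :
    hcG μ (A.join A').f (B.join B').f = hcG μ (jf A.f A'.f) (jf B.f B'.f) :=
  (hcG_congr finProdFinEquiv finProdFinEquiv (join_f_eq A A') (join_f_eq B B')).symm

lemma dyn_cont (hT : Continuous T) {Φ : PartUnity X} (hΦ : Φ.Cont) :
    ∀ n, (PartUnity.dyn T Φ n).Cont
  | 0 => fun _ => continuous_const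
  | (n+1) => by
    intro k
    exact (hΦ _).mul (((dyn_cont hT hΦ n) _).comp hT)

lemma dyn_n {Φ : PartUnity X} : ∀ n, (PartUnity.dyn T Φ n).n = Φ.n ^ n
  | 0 => rfl
  | (n+1) => by
    show Φ.n * (PartUnity.dyn T Φ n).n = Φ.n ^ (n+1)
    rw [dyn_n n, pow_succ]
    ring

/-- Subadditivity of `hcG` over joins. -/
lemma hcG_jf_le {ι ι' κ κ' : Type*} [Fintype ι] [Fintype ι'] [Fintype κ] [Fintype κ']
    {a : ι → X → ℝ} {a' : ι' → X → ℝ} {b : κ → X → ℝ} {b' : κ' → X → ℝ}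
    (ha : IsPU a) (ha' : IsPU a') (hb : IsPU b) (hb' : IsPU b') :
    hcG μ (jf a a') (jf b b') ≤ hcG μ a b + hcG μ a' b' := by
  have hbb' := hb.jf hb'
  have c1 : SG μ (jf (jf a a') (jf b b')) = SG μ (jf b b') + hcG μ (jf a a') (jf b b') :=
    SG_chain (ha.jf ha') hbb'
  have c2 : SG μ (jf (jf a a') (jf b b')) = SG μ (jf a (jf a' (jf b b'))) :=
    SG_jf_assoc a a' (jf b b')
  have c3 : SG μ (jf a (jf a' (jf b b'))) = SG μ (jf a' (jf b b')) + hcG μ a (jf a' (jf b b')) :=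
    SG_chain ha (ha'.jf hbb')
  have c4 : SG μ (jf a' (jf b b')) = SG μ (jf b b') + hcG μ a' (jf b b') :=
    SG_chain ha' hbb'
  have m1 : hcG μ a' (jf b b') ≤ hcG μ a' b' := hcG_mono_left ha' hb hb'
  have m2 : hcG μ a (jf a' (jf b b')) ≤ hcG μ a b := by
    calc hcG μ a (jf a' (jf b b')) ≤ hcG μ a (jf b b') := hcG_mono_left ha ha' hbb'
      _ = hcG μ a (jf b' b) := hcG_snd_comm a b b'
      _ ≤ hcG μ a b := hcG_mono_left ha hb' hb
  linarith

lemma comp_f_eq (Θ : PartUnity X) : (Θ.comp T).f = fun i x => Θ.f i (T x) := rfl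

/-- Key induction: `H(Φ₀ⁿ | Ψ₀ⁿ) ≤ n H(Φ|Ψ)`. -/
lemma hcG_dyn_le (hT : Continuous T) (hμT : MeasurePreserving T μ μ)
    {Φ Ψ : PartUnity X} (hΦ : Φ.Cont) (hΨ : Ψ.Cont) :
    ∀ n : ℕ, hcG μ (PartUnity.dyn T Φ n).f (PartUnity.dyn T Ψ n).f
      ≤ n * hcG μ Φ.f Ψ.f
  | 0 => by
    have : hcG μ (PartUnity.dyn T Φ 0).f (PartUnity.dyn T Ψ 0).f = 0 := by
      simp only [PartUnity.dyn, PartUnity.triv, hcG]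
      simp [negMulLog]
    rw [this]
    simp
  | (n+1) => by
    have ihn := hcG_dyn_le hT hμT hΦ hΨ n
    have hPUΦn : IsPU (PartUnity.dyn T Φ n).f := isPU_of (dyn_cont hT hΦ n)
    have hPUΨn : IsPU (PartUnity.dyn T Ψ n).f := isPU_of (dyn_cont hT hΨ n)
    have hC : IsPU (fun i x => (PartUnity.dyn T Φ n).f i (T x)) := hPUΦn.compT hT
    have hD : IsPU (fun j x => (PartUnity.dyn T Ψ n).f j (T x)) := hPUΨn.compT hT
    have e1 : hcG μ (PartUnity.dyn T Φ (n+1)).f (PartUnity.dyn T Ψ (n+1)).f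
        = hcG μ (jf Φ.f ((PartUnity.dyn T Φ n).comp T).f)
            (jf Ψ.f ((PartUnity.dyn T Ψ n).comp T).f) :=
      hcG_join_join Φ ((PartUnity.dyn T Φ n).comp T) Ψ ((PartUnity.dyn T Ψ n).comp T)
    rw [e1, comp_f_eq, comp_f_eq]
    have e2 := hcG_jf_le (μ := μ) (isPU_of hΦ) hC (isPU_of hΨ) hD
    have e3 : hcG μ (fun i x => (PartUnity.dyn T Φ n).f i (T x))
        (fun j x => (PartUnity.dyn T Ψ n).f j (T x))
        = hcG μ (PartUnity.dyn T Φ n).f (PartUnity.dyn T Ψ n).f :=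
      hcG_compT hμT hPUΦn hPUΨn
    rw [e3] at e2
    push_cast
    refine le_trans e2 ?_
    linarith

/-- `H(Φ₀ⁿ) ≤ H(Ψ₀ⁿ) + n H(Φ|Ψ)`. -/
lemma statEnt_dyn_le (hT : Continuous T) (hμT : MeasurePreserving T μ μ)
    {Φ Ψ : PartUnity X} (hΦ : Φ.Cont) (hΨ : Ψ.Cont) (n : ℕ) :
    statEnt μ (PartUnity.dyn T Φ n) ≤ statEnt μ (PartUnity.dyn T Ψ n)
      + n * hcG μ Φ.f Ψ.f := by
  have hPUΦn : IsPU (PartUnity.dyn T Φ n).f := isPU_of (dyn_cont hT hΦ n)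
  have hPUΨn : IsPU (PartUnity.dyn T Ψ n).f := isPU_of (dyn_cont hT hΨ n)
  have h1 : SG μ (PartUnity.dyn T Φ n).f ≤ SG μ (jf (PartUnity.dyn T Ψ n).f
      (PartUnity.dyn T Φ n).f) := SG_le_jf hPUΨn hPUΦn
  have h2 : SG μ (jf (PartUnity.dyn T Ψ n).f (PartUnity.dyn T Φ n).f)
      = SG μ (jf (PartUnity.dyn T Φ n).f (PartUnity.dyn T Ψ n).f) :=
    SG_jf_comm _ _
  have h3 : SG μ (jf (PartUnity.dyn T Φ n).f (PartUnity.dyn T Ψ n).f)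
      = SG μ (PartUnity.dyn T Ψ n).f
        + hcG μ (PartUnity.dyn T Φ n).f (PartUnity.dyn T Ψ n).f :=
    SG_chain hPUΦn hPUΨn
  have h4 := hcG_dyn_le hT hμT hΦ hΨ n
  rw [statEnt_eq_SG, statEnt_eq_SG]
  linarith



section Limsup
variable [Nonempty X]

lemma statEnt_dyn_nonneg (hT : Continuous T) {Φ : PartUnity X} (hΦ : Φ.Cont) (n : ℕ) :
    0 ≤ statEnt μ (PartUnity.dyn T Φ n) := by
  rw [statEnt_eq_SG]
  exact SG_nonneg (isPU_of (dyn_cont hT hΦ n))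

lemma statEnt_dyn_le_log (hT : Continuous T) {Φ : PartUnity X} (hΦ : Φ.Cont) (n : ℕ) :
    statEnt μ (PartUnity.dyn T Φ n) ≤ n * Real.log Φ.n := by
  rw [statEnt_eq_SG]
  have h1 := SG_le_log (μ := μ) (isPU_of (dyn_cont hT hΦ n))
  have h2 : (Fintype.card (Fin (PartUnity.dyn T Φ n).n) : ℝ) = ((Φ.n : ℝ)) ^ n := by
    rw [Fintype.card_fin, dyn_n]
    push_cast
    ring
  rw [h2] at h1
  rwa [Real.log_pow] at h1

lemma log_n_nonneg (Φ : PartUnity X) : 0 ≤ Real.log Φ.n := by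
  apply Real.log_nonneg
  have := n_pos (X := X) Φ
  exact_mod_cast this

lemma locEnt_nonneg (hT : Continuous T) {Φ : PartUnity X} (hΦ : Φ.Cont) :
    0 ≤ locEnt T μ Φ := by
  have h0 : ∀ n : ℕ, (0:ℝ) ≤ statEnt μ (PartUnity.dyn T Φ n) / n := fun n =>
    div_nonneg (statEnt_dyn_nonneg hT hΦ n) (Nat.cast_nonneg n)
  have hC : ∀ n : ℕ, statEnt μ (PartUnity.dyn T Φ n) / n ≤ Real.log Φ.n := by
    intro n
    rcases Nat.eq_zero_or_pos n with h | h
    · subst h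
      simp [log_n_nonneg (X := X) Φ]
    · rw [div_le_iff₀ (by exact_mod_cast h)]
      calc statEnt μ (PartUnity.dyn T Φ n) ≤ n * Real.log Φ.n := statEnt_dyn_le_log hT hΦ n
        _ = Real.log Φ.n * n := by ring
  refine le_limsup_of_frequently_le (Frequently.of_forall h0) ?_
  exact isBoundedUnder_of ⟨Real.log Φ.n, fun n => hC n⟩

lemma locEnt_le_add (hT : Continuous T) (hμT : MeasurePreserving T μ μ)
    {Φ Ψ : PartUnity X} (hΦ : Φ.Cont) (hΨ : Ψ.Cont) :
    locEnt T μ Φ ≤ locEnt T μ Ψ + hcG μ Φ.f Ψ.f := by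
  set c := hcG μ Φ.f Ψ.f with hc'
  have hc : 0 ≤ c := hcG_nonneg (isPU_of hΦ) (isPU_of hΨ)
  set u : ℕ → ℝ := fun n => statEnt μ (PartUnity.dyn T Φ n) / n with hu'
  set v : ℕ → ℝ := fun n => statEnt μ (PartUnity.dyn T Ψ n) / n with hv'
  have hu0 : ∀ n, 0 ≤ u n := fun n =>
    div_nonneg (statEnt_dyn_nonneg hT hΦ n) (Nat.cast_nonneg n)
  have hv0 : ∀ n, 0 ≤ v n := fun n =>
    div_nonneg (statEnt_dyn_nonneg hT hΨ n) (Nat.cast_nonneg n)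
  have hvC : ∀ n, v n ≤ Real.log Ψ.n := by
    intro n
    rcases Nat.eq_zero_or_pos n with h | h
    · subst h
      simp [hv', log_n_nonneg (X := X) Ψ]
    · rw [hv']
      rw [div_le_iff₀ (by exact_mod_cast h)]
      calc statEnt μ (PartUnity.dyn T Ψ n) ≤ n * Real.log Ψ.n := statEnt_dyn_le_log hT hΨ n
        _ = Real.log Ψ.n * n := by ring
  have huv : ∀ n, u n ≤ v n + c := by
    intro n
    rcases Nat.eq_zero_or_pos n with h | h
    · subst h
      simp [hu', hv']
      exact hc
    · have hn : (0:ℝ) < n := by exact_mod_cast h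
      have h1 := statEnt_dyn_le hT hμT hΦ hΨ n
      rw [hu', hv']
      dsimp only
      rw [div_le_iff₀ hn] at *
      calc statEnt μ (PartUnity.dyn T Φ n)
          ≤ statEnt μ (PartUnity.dyn T Ψ n) + n * c := h1
        _ = (statEnt μ (PartUnity.dyn T Ψ n) / n + c) * n := by field_simp
  have hbv : IsBoundedUnder (· ≤ ·) atTop (fun n => v n + c) :=
    isBoundedUnder_of ⟨Real.log Ψ.n + c, fun n => by linarith [hvC n]⟩
  have hbv' : IsBoundedUnder (· ≤ ·) atTop v := isBoundedUnder_of ⟨Real.log Ψ.n, hvC⟩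
  have hcu : IsCoboundedUnder (· ≤ ·) atTop u :=
    (isBoundedUnder_of ⟨(0:ℝ), hu0⟩ : IsBoundedUnder (· ≥ ·) atTop u).isCoboundedUnder_le
  have hcv : IsCoboundedUnder (· ≤ ·) atTop v :=
    (isBoundedUnder_of ⟨(0:ℝ), hv0⟩ : IsBoundedUnder (· ≥ ·) atTop v).isCoboundedUnder_le
  have step1 : limsup u atTop ≤ limsup (fun n => v n + c) atTop :=
    limsup_le_limsup (Eventually.of_forall huv) hcu hbv
  have step2 : limsup (fun n => v n + c) atTop = limsup v atTop + c :=
    limsup_add_const atTop v c hbv' hcv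
  calc locEnt T μ Φ = limsup u atTop := rfl
    _ ≤ limsup v atTop + c := by rw [← step2]; exact step1
    _ = locEnt T μ Ψ + c := rfl

end Limsup

section Small
variable [Nonempty X]

lemma int_sum_one {Ψ : PartUnity X} (hΨ : Ψ.Cont) : ∑ j, ∫ x, Ψ.f j x ∂μ = 1 := by
  rw [← integral_finset_sum _ (fun j _ => cint μ (hΨ j))]
  have : (fun x => ∑ j, Ψ.f j x) = fun _ => (1:ℝ) := funext Ψ.sum_one
  rw [this]
  simp

/-- If the supports of `Ψ` are small, `H(Φ|Ψ)` is small. -/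
lemma hcG_small {Φ : PartUnity X} (hΦ : Φ.Cont) {ε : ℝ} (hε : 0 < ε) :
    ∃ η > 0, ∀ Ψ : PartUnity X, Ψ.Cont →
      (∀ j : Fin Ψ.n, ∀ x ∈ tsupport (Ψ.f j), ∀ y ∈ tsupport (Ψ.f j), dist x y < η) →
      hcG μ Φ.f Ψ.f ≤ ε := by
  have hn : 0 < Φ.n := n_pos (X := X) Φ
  set ε' := ε / Φ.n with hε''
  have hε' : 0 < ε' := div_pos hε (by exact_mod_cast hn)
  -- modulus of continuity for negMulLog on [0,1]
  obtain ⟨δ, hδpos, hδ⟩ : ∃ δ > 0, ∀ u v : ℝ, u ∈ Icc (0:ℝ) 1 → v ∈ Icc (0:ℝ) 1 →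
      |u - v| < δ → |negMulLog u - negMulLog v| < ε' := by
    have huc : UniformContinuousOn negMulLog (Icc 0 1) :=
      IsCompact.uniformContinuousOn_of_continuous isCompact_Icc
        continuous_negMulLog.continuousOn
    rw [Metric.uniformContinuousOn_iff] at huc
    obtain ⟨δ, hδ, H⟩ := huc ε' hε'
    exact ⟨δ, hδ, fun u v hu hv h => by
      have := H u hu v hv (by rwa [Real.dist_eq])
      rwa [Real.dist_eq] at this⟩
  -- uniform continuity of the members of Φ
  have hηch : ∀ i : Fin Φ.n, ∃ η > 0, ∀ x y : X, dist x y < η →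
      |Φ.f i x - Φ.f i y| < δ/3 := by
    intro i
    have := CompactSpace.uniformContinuous_of_continuous (hΦ i)
    rw [Metric.uniformContinuous_iff] at this
    obtain ⟨η, hη, H⟩ := this (δ/3) (by positivity)
    exact ⟨η, hη, fun x y h => by have := H h; rwa [Real.dist_eq] at this⟩
  choose ηf hηfpos hηf using hηch
  have hne : Finset.univ.Nonempty (α := Fin Φ.n) := ⟨⟨0, hn⟩, Finset.mem_univ _⟩
  set η := Finset.univ.inf' hne ηf with hη'
  have hηpos : 0 < η := by
    rw [hη', Finset.lt_inf'_iff]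
    exact fun i _ => hηfpos i
  refine ⟨η, hηpos, ?_⟩
  intro Ψ hΨ hsupp
  have key : ∀ (j : Fin Ψ.n) (i : Fin Φ.n),
      (∫ x, Ψ.f j x ∂μ) * negMulLog ((∫ x, Φ.f i x * Ψ.f j x ∂μ) / (∫ x, Ψ.f j x ∂μ))
        - ∫ x, Ψ.f j x * negMulLog (Φ.f i x) ∂μ ≤ ε' * ∫ x, Ψ.f j x ∂μ := by
    intro j i
    set B := ∫ x, Ψ.f j x ∂μ with hB'
    set A := ∫ x, Φ.f i x * Ψ.f j x ∂μ with hA'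
    have hB0 : 0 ≤ B := integral_nonneg (Ψ.nonneg j)
    rcases eq_or_lt_of_le hB0 with h | hBpos
    · -- B = 0
      have hae : Ψ.f j =ᵐ[μ] 0 :=
        (integral_eq_zero_iff_of_nonneg (Ψ.nonneg j) (cint μ (hΨ j))).mp h.symm
      have hz : ∫ x, Ψ.f j x * negMulLog (Φ.f i x) ∂μ = 0 := by
        rw [integral_eq_zero_iff_of_nonneg]
        · filter_upwards [hae] with x hx
          simp only [Pi.zero_apply] at hx ⊢
          simp [hx]
        · exact fun x => mul_nonneg (Ψ.nonneg j x) (negMulLog_nonneg (Φ.nonneg i x) (Φ.le_one i x))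
        · exact cint μ ((hΨ j).mul (cont_nml (hΦ i)))
      rw [hz, ← h]
      simp
    · -- B > 0
      obtain ⟨x₀, hx₀⟩ : ∃ x, Ψ.f j x ≠ 0 := by
        by_contra hcon
        push_neg at hcon
        have : B = 0 := by
          rw [hB']
          have : (fun x => Ψ.f j x) = fun _ => (0:ℝ) := funext hcon
          rw [this]
          simp
        linarith
      have hx₀supp : x₀ ∈ tsupport (Ψ.f j) := subset_tsupport _ hx₀
      set s := Φ.f i x₀ with hs'
      have hclose : ∀ x ∈ tsupport (Ψ.f j), |Φ.f i x - s| < δ/3 := by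
        intro x hx
        have hd : dist x x₀ < η := hsupp j x hx x₀ hx₀supp
        have hd2 : dist x x₀ < ηf i := lt_of_lt_of_le hd (Finset.inf'_le _ (Finset.mem_univ i))
        exact hηf i x x₀ hd2
      have hptA : ∀ x, (s - δ/3) * Ψ.f j x ≤ Φ.f i x * Ψ.f j x ∧
          Φ.f i x * Ψ.f j x ≤ (s + δ/3) * Ψ.f j x := by
        intro x
        by_cases hx : Ψ.f j x = 0
        · simp [hx]
        · have hxs : x ∈ tsupport (Ψ.f j) := subset_tsupport _ hx
          have h1 := hclose x hxs
          have h2 := abs_lt.mp h1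
          constructor
          · exact mul_le_mul_of_nonneg_right (by linarith [h2.1]) (Ψ.nonneg j x)
          · exact mul_le_mul_of_nonneg_right (by linarith [h2.2]) (Ψ.nonneg j x)
      have hA1 : (s - δ/3) * B ≤ A := by
        rw [hA', hB', ← integral_const_mul]
        exact integral_mono (cint μ (continuous_const.mul (hΨ j)))
          (cint μ ((hΦ i).mul (hΨ j))) fun x => (hptA x).1
      have hA2 : A ≤ (s + δ/3) * B := by
        rw [hA', hB', ← integral_const_mul]
        exact integral_mono (cint μ ((hΦ i).mul (hΨ j)))
          (cint μ (continuous_const.mul (hΨ j))) fun x => (hptA x).2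
      set v := A / B with hv'
      have hA0 : 0 ≤ A := A_nonneg (Φ.nonneg i) (Ψ.nonneg j)
      have hAB : A ≤ B := A_le_B (hΦ i) (hΨ j) (Φ.nonneg i) (Φ.le_one i) (Ψ.nonneg j)
      have hv01 : v ∈ Icc (0:ℝ) 1 :=
        ⟨div_nonneg hA0 hB0, (div_le_one hBpos).mpr hAB⟩
      have hvclose : |s - v| ≤ δ/3 := by
        rw [abs_le]
        constructor
        · have : v ≤ s + δ/3 := (div_le_iff₀ hBpos).mpr (by linarith)
          linarith
        · have : s - δ/3 ≤ v := (le_div_iff₀ hBpos).mpr (by linarith)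
          linarith
      have hptw : ∀ x, Ψ.f j x * (negMulLog v - ε') ≤ Ψ.f j x * negMulLog (Φ.f i x) := by
        intro x
        by_cases hx : Ψ.f j x = 0
        · simp [hx]
        · have hxs : x ∈ tsupport (Ψ.f j) := subset_tsupport _ hx
          have h1 := hclose x hxs
          have hφ01 : Φ.f i x ∈ Icc (0:ℝ) 1 := ⟨Φ.nonneg i x, Φ.le_one i x⟩
          have h3 : |Φ.f i x - v| < δ := by
            have := abs_sub_abs_le_abs_sub (Φ.f i x - s) (v - s)
            have h4 : |Φ.f i x - v| ≤ |Φ.f i x - s| + |s - v| := by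
              calc |Φ.f i x - v| = |(Φ.f i x - s) + (s - v)| := by ring_nf
                _ ≤ |Φ.f i x - s| + |s - v| := abs_add_le _ _
            linarith [hvclose]
          have h5 := hδ (Φ.f i x) v hφ01 hv01 h3
          have h6 := abs_lt.mp h5
          exact mul_le_mul_of_nonneg_left (by linarith [h6.2]) (Ψ.nonneg j x)
      have hint : (negMulLog v - ε') * B ≤ ∫ x, Ψ.f j x * negMulLog (Φ.f i x) ∂μ := by
        have := integral_mono (μ := μ)
          (cint μ ((hΨ j).mul continuous_const) : Integrable (fun x => Ψ.f j x * (negMulLog v - ε')) μ)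
          (cint μ ((hΨ j).mul (cont_nml (hΦ i))) : Integrable (fun x => Ψ.f j x * negMulLog (Φ.f i x)) μ) hptw
        rwa [integral_mul_const, hB'.symm, mul_comm] at this
      calc B * negMulLog v - ∫ x, Ψ.f j x * negMulLog (Φ.f i x) ∂μ
          ≤ B * negMulLog v - (negMulLog v - ε') * B := by linarith
        _ = ε' * B := by ring
  -- sum up
  have hsum : hcG μ Φ.f Ψ.f ≤ ∑ j, ∑ i : Fin Φ.n, ε' * ∫ x, Ψ.f j x ∂μ := by
    refine Finset.sum_le_sum fun j _ => Finset.sum_le_sum fun i _ => key j i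
  have heq : ∑ j, ∑ i : Fin Φ.n, ε' * ∫ x, Ψ.f j x ∂μ = ε := by
    have h1 : ∀ j : Fin Ψ.n, ∑ i : Fin Φ.n, ε' * ∫ x, Ψ.f j x ∂μ
        = (Φ.n : ℝ) * (ε' * ∫ x, Ψ.f j x ∂μ) := by
      intro j
      rw [Finset.sum_const, Finset.card_univ, Fintype.card_fin, nsmul_eq_mul]
    rw [Finset.sum_congr rfl fun j _ => h1 j, ← Finset.mul_sum, ← Finset.mul_sum,
      int_sum_one hΨ, mul_one, hε'']
    have : (Φ.n : ℝ) ≠ 0 := by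
      have := hn
      positivity
    field_simp
  linarith [hsum, heq.le]

end Small



end Bridge
end EntAux

/-- If `diam(Ψ_k) → 0` then `h̃_μ(T,Ψ_k) → h̃_μ(T)` for every
`T`-invariant Borel probability measure `μ`. -/
theorem locEnt_tendsto_metEnt_of_diam_tendsto_zero {X : Type*} [MetricSpace X] [CompactSpace X] [Nonempty X]
    [MeasurableSpace X] [BorelSpace X]
    (T : X → X) (hT : Continuous T) (hTsurj : Function.Surjective T)
    (Ψ : ℕ → PartUnity X) (hΨc : ∀ k, (Ψ k).Cont)
    (hdiam : Filter.Tendsto (fun k => (Ψ k).diam) Filter.atTop (nhds 0))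
    (μ : Measure X) [IsProbabilityMeasure μ] (hμ : MeasurePreserving T μ μ) :
    Filter.Tendsto (fun k => ((locEnt T μ (Ψ k) : ℝ) : EReal)) Filter.atTop
      (nhds (metEnt T μ)) := by
  have key_ub : ∀ k, ((locEnt T μ (Ψ k) : ℝ) : EReal) ≤ metEnt T μ := fun k =>
    le_iSup (fun Φ : {Φ : PartUnity X // Φ.Cont} => ((locEnt T μ Φ.1 : ℝ) : EReal))
      ⟨Ψ k, hΨc k⟩
  rw [tendsto_order]
  constructor
  · intro a ha
    rw [metEnt, lt_iSup_iff] at ha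
    obtain ⟨⟨Φ, hΦ⟩, hlt⟩ := ha
    induction a with
    | bot => exact Filter.Eventually.of_forall fun k => EReal.bot_lt_coe _
    | coe r =>
      have hr : r < locEnt T μ Φ := EReal.coe_lt_coe_iff.mp hlt
      set ε := (locEnt T μ Φ - r) / 2 with hε'
      have hεpos : 0 < ε := by
        rw [hε']
        linarith
      obtain ⟨η, hηpos, hsmall⟩ := EntAux.hcG_small (μ := μ) hΦ hεpos
      have hev : ∀ᶠ k in Filter.atTop, (Ψ k).diam < η :=
        hdiam.eventually (gt_mem_nhds hηpos)
      filter_upwards [hev] with k hk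
      have hsupp : ∀ j : Fin (Ψ k).n, ∀ x ∈ tsupport ((Ψ k).f j),
          ∀ y ∈ tsupport ((Ψ k).f j), dist x y < η := by
        intro j x hx y hy
        have hb : Bornology.IsBounded (tsupport ((Ψ k).f j)) :=
          (isClosed_tsupport _).isCompact.isBounded
        have h1 : dist x y ≤ Metric.diam (tsupport ((Ψ k).f j)) :=
          Metric.dist_le_diam_of_mem hb hx hy
        have h2 : Metric.diam (tsupport ((Ψ k).f j)) ≤ (Ψ k).diam := by
          rw [PartUnity.diam]
          exact le_ciSup (Set.Finite.bddAbove (Set.finite_range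
            (fun i => Metric.diam (tsupport ((Ψ k).f i))))) j
        linarith [hk]
      have h1 : EntAux.hcG μ Φ.f (Ψ k).f ≤ ε := hsmall (Ψ k) (hΨc k) hsupp
      have h2 : locEnt T μ Φ ≤ locEnt T μ (Ψ k) + EntAux.hcG μ Φ.f (Ψ k).f :=
        EntAux.locEnt_le_add hT hμ hΦ (hΨc k)
      have h3 : r < locEnt T μ (Ψ k) := by
        rw [hε'] at h1
        linarith
      exact EReal.coe_lt_coe_iff.mpr h3
    | top => exact absurd hlt (not_lt.mpr le_top)
  · intro a ha
    exact Filter.Eventually.of_forall fun k => lt_of_le_of_lt (key_ub k) ha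
end

section
/- Let (X,T) be a topological dynamical system. For every T-invariant Borel probability measure μ on X, h̃_μ(T) = sup{ h̃_μ(T,Φ) : Φ a positive continuous partition of unity on X }, where a partition of unity is positive if each of its functions is strictly positive everywhere. -/
open MeasureTheory Filter Set

/-! ### Metric entropy via partitions of unity -/

variable {X Y : Type*}

section Aux

open Real

variable {X : Type*} [MetricSpace X] [CompactSpace X] [MeasurableSpace X] [BorelSpace X]
  {μ : Measure X}

private lemma cont_integrable (μ : Measure X) [IsFiniteMeasure μ] {g : X → ℝ}
    (hg : Continuous g) : Integrable g μ :=
  hg.integrable_of_hasCompactSupport (HasCompactSupport.of_compactSpace g)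

private lemma sum_integral_eq_one [IsProbabilityMeasure μ] (Ξ : PartUnity X) (hΞ : Ξ.Cont) :
    ∑ j, ∫ x, Ξ.f j x ∂μ = 1 := by
  rw [← integral_finset_sum _ (fun j _ => cont_integrable μ (hΞ j))]
  simp [Ξ.sum_one]

private lemma statEnt_nonneg_s13 [IsProbabilityMeasure μ] (Ξ : PartUnity X) (hΞ : Ξ.Cont) :
    0 ≤ statEnt μ Ξ := by
  refine Finset.sum_nonneg fun i _ => ?_
  have h := Real.convexOn_mul_log.map_integral_le (μ := μ) (f := Ξ.f i)
    Real.continuous_mul_log.continuousOn isClosed_Ici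
    (Filter.Eventually.of_forall fun x => Ξ.nonneg i x)
    (cont_integrable μ (hΞ i))
    (cont_integrable μ (Real.continuous_mul_log.comp (hΞ i)))
  linarith

private lemma sum_negMulLog_le {m : ℕ} (c : Fin m → ℝ) (h0 : ∀ i, 0 ≤ c i)
    (h1 : ∑ i, c i = 1) : ∑ i, Real.negMulLog (c i) ≤ Real.log m := by
  have hm : 0 < m := by
    rcases Nat.eq_zero_or_pos m with h | h
    · subst h; simp at h1
    · exact h
  have hmR : (0:ℝ) < m := by exact_mod_cast hm
  have key : ∀ i, Real.negMulLog (c i) ≤ c i * Real.log m + (1 / m - c i) := by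
    intro i
    rcases eq_or_lt_of_le (h0 i) with h | h
    · simp [← h]; try positivity
    · have h2 : Real.log ((c i * m)⁻¹) ≤ (c i * m)⁻¹ - 1 :=
        Real.log_le_sub_one_of_pos (by positivity)
      rw [Real.log_inv] at h2
      have h3 : -Real.log (c i * m) ≤ (c i * m)⁻¹ - 1 := by linarith
      have h4 : c i * (-Real.log (c i * m)) ≤ c i * ((c i * m)⁻¹ - 1) :=
        mul_le_mul_of_nonneg_left h3 (h0 i)
      have h5 : c i * ((c i * m)⁻¹ - 1) = 1 / m - c i := by
        field_simp; try ring
      rw [Real.log_mul h.ne' hmR.ne'] at h4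
      rw [Real.negMulLog]
      nlinarith [h4, h5]
  calc ∑ i, Real.negMulLog (c i) ≤ ∑ i, (c i * Real.log m + (1 / m - c i)) :=
        Finset.sum_le_sum fun i _ => key i
    _ = (∑ i, c i) * Real.log m + (m * (1/m) - ∑ i, c i) := by
        rw [Finset.sum_add_distrib, Finset.sum_sub_distrib, ← Finset.sum_mul]
        simp [Finset.card_univ]
        try ring
    _ = Real.log m := by rw [h1]; field_simp; ring

private lemma statEnt_le_log_s13 [IsProbabilityMeasure μ] (Ξ : PartUnity X) (hΞ : Ξ.Cont) :
    statEnt μ Ξ ≤ Real.log Ξ.n := by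
  have step1 : statEnt μ Ξ ≤ ∑ i, Real.negMulLog (∫ x, Ξ.f i x ∂μ) := by
    refine Finset.sum_le_sum fun i _ => ?_
    have h1 : ∫ x, Ξ.f i x * Real.log (Ξ.f i x) ∂μ ≤ 0 := by
      refine integral_nonpos (fun x => ?_)
      exact mul_nonpos_of_nonneg_of_nonpos (Ξ.nonneg i x)
        (Real.log_nonpos (Ξ.nonneg i x) (Ξ.le_one i x))
    rw [Real.negMulLog]
    linarith
  refine step1.trans (sum_negMulLog_le _ (fun i => integral_nonneg (Ξ.nonneg i)) ?_)
  exact sum_integral_eq_one Ξ hΞ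

end Aux
section Mixing

private def Mix {X : Type*} (Ξ' Ξ : PartUnity X) (h : ℝ) : Prop :=
  ∃ M : Fin Ξ'.n → Fin Ξ.n → ℝ,
    (∀ i j, 0 < M i j) ∧ (∀ i, ∑ j, M i j = 1) ∧ (∀ j, ∑ i, M i j = 1) ∧
    (∀ j, -∑ i, M i j * Real.log (M i j) ≤ h) ∧
    (∀ i x, Ξ'.f i x = ∑ j, M i j * Ξ.f j x)

private lemma mix_mono {X : Type*} {Ξ' Ξ : PartUnity X} {h h' : ℝ} (hm : Mix Ξ' Ξ h)
    (hle : h ≤ h') : Mix Ξ' Ξ h' := by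
  obtain ⟨M, h1, h2, h3, h4, h5⟩ := hm
  exact ⟨M, h1, h2, h3, fun j => (h4 j).trans hle, h5⟩

private lemma mix_triv {X : Type*} : Mix (PartUnity.triv X) (PartUnity.triv X) 0 :=
  ⟨fun _ _ => 1, fun _ _ => one_pos, by simp [PartUnity.triv]; rfl, by simp [PartUnity.triv]; rfl,
    by simp [PartUnity.triv], by simp [PartUnity.triv]; intro; erw [Finset.card_univ, Fintype.card_fin]; norm_num [PartUnity.triv]⟩

private lemma mix_comp {X : Type*} {Ξ' Ξ : PartUnity X} {h : ℝ} (T : X → X) (hm : Mix Ξ' Ξ h) :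
    Mix (Ξ'.comp T) (Ξ.comp T) h := by
  obtain ⟨M, h1, h2, h3, h4, h5⟩ := hm
  exact ⟨M, h1, h2, h3, h4, fun i x => h5 i (T x)⟩

private lemma mix_join {X : Type*} {Ξ' Ξ Θ' Θ : PartUnity X} {h h' : ℝ}
    (hm : Mix Ξ' Ξ h) (hm' : Mix Θ' Θ h') : Mix (Ξ'.join Θ') (Ξ.join Θ) (h + h') := by
  obtain ⟨M, m1, m2, m3, m4, m5⟩ := hm
  obtain ⟨N, n1, n2, n3, n4, n5⟩ := hm'
  refine ⟨fun p q => M (finProdFinEquiv.symm p).1 (finProdFinEquiv.symm q).1 *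
      N (finProdFinEquiv.symm p).2 (finProdFinEquiv.symm q).2,
      fun p q => mul_pos (m1 _ _) (n1 _ _), fun p => ?_, fun q => ?_, fun q => ?_, fun p x => ?_⟩
  · dsimp only [PartUnity.join]
    erw [← Equiv.sum_comp (finProdFinEquiv : Fin Ξ.n × Fin Θ.n ≃ Fin (Ξ.n * Θ.n))
      (fun q => M (finProdFinEquiv.symm p).1 (finProdFinEquiv.symm q).1 *
        N (finProdFinEquiv.symm p).2 (finProdFinEquiv.symm q).2)]
    simp only [Equiv.symm_apply_apply]
    rw [Fintype.sum_prod_type]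
    dsimp only
    rw [← Finset.sum_mul_sum, m2 _, n2 _, one_mul]
  · dsimp only [PartUnity.join]
    erw [← Equiv.sum_comp (finProdFinEquiv : Fin Ξ'.n × Fin Θ'.n ≃ Fin (Ξ'.n * Θ'.n))
      (fun p => M (finProdFinEquiv.symm p).1 (finProdFinEquiv.symm q).1 *
        N (finProdFinEquiv.symm p).2 (finProdFinEquiv.symm q).2)]
    simp only [Equiv.symm_apply_apply]
    rw [Fintype.sum_prod_type]
    dsimp only
    rw [← Finset.sum_mul_sum, m3 _, n3 _, one_mul]
  · dsimp only [PartUnity.join]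
    have key : ∑ p, (M (finProdFinEquiv.symm p).1 (finProdFinEquiv.symm q).1 *
        N (finProdFinEquiv.symm p).2 (finProdFinEquiv.symm q).2) *
        Real.log (M (finProdFinEquiv.symm p).1 (finProdFinEquiv.symm q).1 *
          N (finProdFinEquiv.symm p).2 (finProdFinEquiv.symm q).2) =
        (∑ i, M i (finProdFinEquiv.symm q).1 * Real.log (M i (finProdFinEquiv.symm q).1)) +
        (∑ i, N i (finProdFinEquiv.symm q).2 * Real.log (N i (finProdFinEquiv.symm q).2)) := by
      rw [← Equiv.sum_comp (finProdFinEquiv : Fin Ξ'.n × Fin Θ'.n ≃ Fin (Ξ'.n * Θ'.n))]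
      simp only [Equiv.symm_apply_apply]
      rw [Fintype.sum_prod_type]
      dsimp only
      have expand : ∀ (i : Fin Ξ'.n) (i' : Fin Θ'.n),
          (M i (finProdFinEquiv.symm q).1 * N i' (finProdFinEquiv.symm q).2) *
            Real.log (M i (finProdFinEquiv.symm q).1 * N i' (finProdFinEquiv.symm q).2) =
          (M i (finProdFinEquiv.symm q).1 * Real.log (M i (finProdFinEquiv.symm q).1)) *
            N i' (finProdFinEquiv.symm q).2 +
          M i (finProdFinEquiv.symm q).1 *
            (N i' (finProdFinEquiv.symm q).2 * Real.log (N i' (finProdFinEquiv.symm q).2)) := by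
        intro i i'
        rw [Real.log_mul (m1 _ _).ne' (n1 _ _).ne']
        ring
      simp only [expand, Finset.sum_add_distrib, ← Finset.sum_mul, ← Finset.mul_sum]
      rw [n3 _, m3 _]
      ring
    erw [key]
    have := m4 (finProdFinEquiv.symm q).1
    have := n4 (finProdFinEquiv.symm q).2
    linarith
  · dsimp only [PartUnity.join]
    rw [m5 _ x, n5 _ x, Finset.sum_mul_sum]
    erw [← Equiv.sum_comp (finProdFinEquiv : Fin Ξ.n × Fin Θ.n ≃ Fin (Ξ.n * Θ.n))
      (fun q => (M (finProdFinEquiv.symm p).1 (finProdFinEquiv.symm q).1 *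
        N (finProdFinEquiv.symm p).2 (finProdFinEquiv.symm q).2) *
        (Ξ.f (finProdFinEquiv.symm q).1 x * Θ.f (finProdFinEquiv.symm q).2 x))]
    simp only [Equiv.symm_apply_apply]
    rw [Fintype.sum_prod_type]
    refine Finset.sum_congr rfl fun j _ => Finset.sum_congr rfl fun j' _ => ?_
    ring

private lemma dyn_cont {X : Type*} [TopologicalSpace X] {T : X → X} (hT : Continuous T)
    {Φ : PartUnity X} (hΦ : Φ.Cont) : ∀ n, (PartUnity.dyn T Φ n).Cont
  | 0 => fun _ => continuous_const
  | n + 1 => fun k => (hΦ _).mul ((dyn_cont hT hΦ n _).comp hT)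

private lemma dyn_n {X : Type*} (T : X → X) (Φ : PartUnity X) :
    ∀ n, (PartUnity.dyn T Φ n).n = Φ.n ^ n
  | 0 => rfl
  | n + 1 => by
    show Φ.n * (PartUnity.dyn T Φ n).n = _
    rw [dyn_n T Φ n, pow_succ]
    ring

private lemma mix_dyn {X : Type*} (T : X → X) {Ψ Φ : PartUnity X} {a : ℝ} (ha : 0 ≤ a)
    (hm : Mix Ψ Φ a) : ∀ n, Mix (PartUnity.dyn T Ψ n) (PartUnity.dyn T Φ n) (n * a)
  | 0 => by
    rw [Nat.cast_zero, zero_mul]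
    exact mix_triv
  | n + 1 => by
    refine mix_mono (mix_join hm (mix_comp T (mix_dyn T ha hm n))) (le_of_eq ?_)
    push_cast
    ring

end Mixing
section LemmaA

variable {X : Type*} [MetricSpace X] [CompactSpace X] [MeasurableSpace X] [BorelSpace X]
  {μ : Measure X}

private lemma statEnt_def' (μ : Measure X) (Ξ : PartUnity X) :
    statEnt μ Ξ = ∑ i, (Real.negMulLog (∫ x, Ξ.f i x ∂μ) +
      ∫ x, Ξ.f i x * Real.log (Ξ.f i x) ∂μ) := by
  simp [statEnt, Real.negMulLog, neg_mul]

private lemma statEnt_le_of_mix [IsProbabilityMeasure μ] {Ξ' Ξ : PartUnity X} {h : ℝ}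
    (hm : Mix Ξ' Ξ h) (hΞ : Ξ.Cont) : statEnt μ Ξ ≤ statEnt μ Ξ' + h := by
  obtain ⟨M, m1, m2, m3, m4, m5⟩ := hm
  have hΞ' : Ξ'.Cont := by
    intro i
    have heq : Ξ'.f i = fun x => ∑ j, M i j * Ξ.f j x := funext (m5 i)
    rw [heq]
    exact continuous_finset_sum _ fun j _ => continuous_const.mul (hΞ j)
  set c : Fin Ξ.n → ℝ := fun j => ∫ x, Ξ.f j x ∂μ with hc
  set D : Fin Ξ.n → ℝ := fun j => ∫ x, Ξ.f j x * Real.log (Ξ.f j x) ∂μ with hD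
  have hc0 : ∀ j, 0 ≤ c j := fun j => integral_nonneg (Ξ.nonneg j)
  have hcsum : ∑ j, c j = 1 := sum_integral_eq_one Ξ hΞ
  have hint : ∀ i, ∫ x, Ξ'.f i x ∂μ = ∑ j, M i j * c j := by
    intro i
    simp only [m5]
    rw [integral_finset_sum _ (fun j _ => (cont_integrable μ (hΞ j)).const_mul _)]
    exact Finset.sum_congr rfl fun j _ => integral_const_mul _ _
  have key1 : ∀ i, ∑ j, (M i j * D j + (M i j * Real.log (M i j)) * c j)
      ≤ ∫ x, Ξ'.f i x * Real.log (Ξ'.f i x) ∂μ := by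
    intro i
    have hInt : ∀ j : Fin Ξ.n, Integrable (fun x => M i j * (Ξ.f j x * Real.log (Ξ.f j x))
        + (M i j * Real.log (M i j)) * Ξ.f j x) μ :=
      fun j => ((cont_integrable μ (Real.continuous_mul_log.comp (hΞ j))).const_mul _).add
        ((cont_integrable μ (hΞ j)).const_mul _)
    have heq : ∑ j, (M i j * D j + (M i j * Real.log (M i j)) * c j)
        = ∫ x, ∑ j, (M i j * (Ξ.f j x * Real.log (Ξ.f j x))
          + (M i j * Real.log (M i j)) * Ξ.f j x) ∂μ := by
      rw [integral_finset_sum _ (fun j _ => hInt j)]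
      refine Finset.sum_congr rfl fun j _ => ?_
      have i1 : Integrable (fun x => M i j * (Ξ.f j x * Real.log (Ξ.f j x))) μ :=
        (cont_integrable μ (Real.continuous_mul_log.comp (hΞ j))).const_mul _
      have i2 : Integrable (fun x => (M i j * Real.log (M i j)) * Ξ.f j x) μ :=
        (cont_integrable μ (hΞ j)).const_mul _
      rw [integral_add i1 i2, integral_const_mul, integral_const_mul]
    rw [heq]
    refine integral_mono (integrable_finset_sum _ (fun j _ => hInt j))
      (cont_integrable μ (Real.continuous_mul_log.comp (hΞ' i))) fun x => ?_
    have hsum : Ξ'.f i x = ∑ j, M i j * Ξ.f j x := m5 i x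
    have hterm : ∀ j : Fin Ξ.n, M i j * (Ξ.f j x * Real.log (Ξ.f j x))
        + (M i j * Real.log (M i j)) * Ξ.f j x ≤ (M i j * Ξ.f j x) * Real.log (Ξ'.f i x) := by
      intro j
      rcases eq_or_lt_of_le (Ξ.nonneg j x) with hz | hz
      · rw [← hz]; simp
      · have h1 : M i j * Ξ.f j x ≤ Ξ'.f i x := by
          rw [hsum]
          exact Finset.single_le_sum (fun j' _ => mul_nonneg (m1 i j').le (Ξ.nonneg j' x))
            (Finset.mem_univ j)
        have h2 : (0:ℝ) < M i j * Ξ.f j x := mul_pos (m1 i j) hz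
        have h3 : Real.log (M i j * Ξ.f j x) ≤ Real.log (Ξ'.f i x) := Real.log_le_log h2 h1
        rw [Real.log_mul (m1 i j).ne' hz.ne'] at h3
        have h4 := mul_le_mul_of_nonneg_left h3 h2.le
        calc M i j * (Ξ.f j x * Real.log (Ξ.f j x)) + (M i j * Real.log (M i j)) * Ξ.f j x
            = (M i j * Ξ.f j x) * (Real.log (M i j) + Real.log (Ξ.f j x)) := by ring
          _ ≤ (M i j * Ξ.f j x) * Real.log (Ξ'.f i x) := h4
    calc ∑ j, (M i j * (Ξ.f j x * Real.log (Ξ.f j x)) + (M i j * Real.log (M i j)) * Ξ.f j x)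
        ≤ ∑ j, (M i j * Ξ.f j x) * Real.log (Ξ'.f i x) := Finset.sum_le_sum fun j _ => hterm j
      _ = Ξ'.f i x * Real.log (Ξ'.f i x) := by rw [← Finset.sum_mul, ← hsum]
  have key2 : ∀ i, ∑ j, M i j * Real.negMulLog (c j) ≤ Real.negMulLog (∫ x, Ξ'.f i x ∂μ) := by
    intro i
    rw [hint i]
    have hj := Real.concaveOn_negMulLog.le_map_sum (t := Finset.univ) (w := M i) (p := c)
      (fun j _ => (m1 i j).le) (m2 i) (fun j _ => hc0 j)
    simpa [smul_eq_mul] using hj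
  have step : ∑ i, (∑ j, M i j * (Real.negMulLog (c j) + D j)
      + ∑ j, (M i j * Real.log (M i j)) * c j) ≤ statEnt μ Ξ' := by
    rw [statEnt_def' μ Ξ']
    refine Finset.sum_le_sum fun i _ => ?_
    have e1 : ∑ j, M i j * (Real.negMulLog (c j) + D j) + ∑ j, (M i j * Real.log (M i j)) * c j
        = (∑ j, M i j * Real.negMulLog (c j))
          + ∑ j, (M i j * D j + (M i j * Real.log (M i j)) * c j) := by
      simp only [mul_add, Finset.sum_add_distrib]
      ring
    rw [e1]
    exact add_le_add (key2 i) (key1 i)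
  have swap1 : ∑ i, ∑ j, M i j * (Real.negMulLog (c j) + D j)
      = ∑ j, (Real.negMulLog (c j) + D j) := by
    rw [Finset.sum_comm]
    refine Finset.sum_congr rfl fun j _ => ?_
    rw [← Finset.sum_mul, m3 j, one_mul]
  have swap2 : ∑ i, ∑ j, (M i j * Real.log (M i j)) * c j
      = ∑ j, (∑ i, M i j * Real.log (M i j)) * c j := by
    rw [Finset.sum_comm]
    exact Finset.sum_congr rfl fun j _ => (Finset.sum_mul _ _ _).symm
  have hbound : -h ≤ ∑ j, (∑ i, M i j * Real.log (M i j)) * c j := by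
    have ht : ∀ j, (-h) * c j ≤ (∑ i, M i j * Real.log (M i j)) * c j := fun j =>
      mul_le_mul_of_nonneg_right (by linarith [m4 j]) (hc0 j)
    calc -h = ∑ j, (-h) * c j := by rw [← Finset.mul_sum, hcsum, mul_one]
      _ ≤ _ := Finset.sum_le_sum fun j _ => ht j
  have hΞeq : statEnt μ Ξ = ∑ j, (Real.negMulLog (c j) + D j) := statEnt_def' μ Ξ
  have htot : ∑ i, (∑ j, M i j * (Real.negMulLog (c j) + D j)
      + ∑ j, (M i j * Real.log (M i j)) * c j)
      = statEnt μ Ξ + ∑ j, (∑ i, M i j * Real.log (M i j)) * c j := by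
    rw [Finset.sum_add_distrib, swap1, swap2, hΞeq]
  rw [htot] at step
  linarith

end LemmaA
section LocEntComp

variable {X : Type*} [MetricSpace X] [CompactSpace X] [Nonempty X] [MeasurableSpace X]
  [BorelSpace X] {μ : Measure X}

private lemma partUnity_n_pos (Ξ : PartUnity X) : 0 < Ξ.n := by
  obtain ⟨n, f, h1, h2, h3⟩ := Ξ
  cases n with
  | zero =>
    exfalso
    have x := Classical.arbitrary X
    simpa using h3 x
  | succ n => exact n.succ_pos

private lemma locEnt_le_of_mix [IsProbabilityMeasure μ] {T : X → X} (hT : Continuous T)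
    {Φ Ψ : PartUnity X} (hΦ : Φ.Cont) (hΨ : Ψ.Cont) {a : ℝ} (ha : 0 ≤ a)
    (hm : Mix Ψ Φ a) : locEnt T μ Φ ≤ locEnt T μ Ψ + a := by
  set u : ℕ → ℝ := fun n => statEnt μ (PartUnity.dyn T Φ n) / n with hu
  set v : ℕ → ℝ := fun n => statEnt μ (PartUnity.dyn T Ψ n) / n with hv
  have hu0 : ∀ n, 0 ≤ u n := fun n =>
    div_nonneg (statEnt_nonneg_s13 _ (dyn_cont hT hΦ n)) (Nat.cast_nonneg n)
  have hvle : ∀ n, v n ≤ Real.log Ψ.n := by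
    intro n
    rcases Nat.eq_zero_or_pos n with h | h
    · subst h
      simp only [hv, Nat.cast_zero, div_zero]
      exact Real.log_nonneg (by exact_mod_cast partUnity_n_pos Ψ)
    · have hb := statEnt_le_log_s13 (μ := μ) (PartUnity.dyn T Ψ n) (dyn_cont hT hΨ n)
      rw [dyn_n] at hb
      have hcast : Real.log ((Ψ.n ^ n : ℕ) : ℝ) = n * Real.log Ψ.n := by
        push_cast
        rw [Real.log_pow]
      rw [hcast] at hb
      have hn0 : (0:ℝ) < n := by exact_mod_cast h
      show statEnt μ (PartUnity.dyn T Ψ n) / n ≤ Real.log Ψ.n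
      rw [div_le_iff₀ hn0]
      linarith [hb, mul_comm (n:ℝ) (Real.log Ψ.n)]
  have huv : ∀ n, 1 ≤ n → u n ≤ v n + a := by
    intro n hn
    have hle := statEnt_le_of_mix (μ := μ) (mix_dyn T ha hm n) (dyn_cont hT hΦ n)
    have hn0 : (0:ℝ) < n := by exact_mod_cast hn
    show statEnt μ (PartUnity.dyn T Φ n) / n ≤ statEnt μ (PartUnity.dyn T Ψ n) / n + a
    have hv' : statEnt μ (PartUnity.dyn T Ψ n) / n * n = statEnt μ (PartUnity.dyn T Ψ n) :=
      div_mul_cancel₀ _ hn0.ne'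
    rw [div_le_iff₀ hn0, add_mul, hv']
    linarith [hle, mul_comm (n:ℝ) a]
  show Filter.atTop.limsup u ≤ Filter.atTop.limsup v + a
  have hu_cb : Filter.IsCoboundedUnder (· ≤ ·) Filter.atTop u :=
    Filter.IsBoundedUnder.isCoboundedUnder_le
      (Filter.isBoundedUnder_of ⟨0, fun n => hu0 n⟩)
  have hv_bdd : Filter.IsBoundedUnder (· ≤ ·) Filter.atTop v :=
    Filter.isBoundedUnder_of ⟨Real.log Ψ.n, hvle⟩
  refine le_of_forall_pos_le_add fun ε hε => ?_
  have hlt : Filter.atTop.limsup v < Filter.atTop.limsup v + ε := by linarith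
  have hev := Filter.eventually_lt_of_limsup_lt hlt hv_bdd
  refine Filter.limsup_le_of_le hu_cb ?_
  filter_upwards [hev, Filter.eventually_ge_atTop 1] with n h1 h2
  have h3 := huv n h2
  linarith

end LocEntComp
section Construction

variable {X : Type*} [MetricSpace X] [CompactSpace X] [Nonempty X] [MeasurableSpace X]
  [BorelSpace X] {μ : Measure X}

@[reducible] private noncomputable def mixPU (Φ : PartUnity X) (t : ℝ) (ht0 : 0 < t) (ht1 : t < 1) :
    PartUnity X where
  n := Φ.n
  f i x := (1 - t) * Φ.f i x + t / Φ.n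
  nonneg i x := add_nonneg (mul_nonneg (by linarith) (Φ.nonneg i x))
    (div_nonneg ht0.le (Nat.cast_nonneg _))
  le_one i x := by
    have hk : (1:ℝ) ≤ Φ.n := by exact_mod_cast partUnity_n_pos Φ
    have h1 : t / Φ.n ≤ t := div_le_self ht0.le hk
    nlinarith [Φ.le_one i x, Φ.nonneg i x]
  sum_one x := by
    have hk : (0:ℝ) < Φ.n := by exact_mod_cast partUnity_n_pos Φ
    rw [Finset.sum_add_distrib, ← Finset.mul_sum, Φ.sum_one x, Finset.sum_const,
      Finset.card_univ, Fintype.card_fin, nsmul_eq_mul]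
    field_simp; ring

private lemma mixPU_cont {Φ : PartUnity X} (hΦ : Φ.Cont) (t : ℝ) (ht0 : 0 < t) (ht1 : t < 1) :
    (mixPU Φ t ht0 ht1).Cont :=
  fun i => (continuous_const.mul (hΦ i)).add continuous_const

private lemma mixPU_pos (Φ : PartUnity X) (t : ℝ) (ht0 : 0 < t) (ht1 : t < 1) :
    (mixPU Φ t ht0 ht1).Pos := by
  intro i x
  have hk : (0:ℝ) < Φ.n := by exact_mod_cast partUnity_n_pos Φ
  have h1 : 0 < t / Φ.n := div_pos ht0 hk
  have h2 : 0 ≤ (1 - t) * Φ.f i x := mul_nonneg (by linarith) (Φ.nonneg i x)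
  show 0 < (1 - t) * Φ.f i x + t / Φ.n
  linarith

private noncomputable def entA (k : ℕ) (t : ℝ) : ℝ :=
  Real.negMulLog (1 - t + t / k) + ((k:ℝ) - 1) * Real.negMulLog (t / k)

private lemma entA_nonneg (k : ℕ) (hk : 0 < k) {t : ℝ} (ht0 : 0 < t) (ht1 : t < 1) :
    0 ≤ entA k t := by
  have hk1 : (1:ℝ) ≤ k := by exact_mod_cast hk
  have hb0 : 0 ≤ t / k := div_nonneg ht0.le (by linarith)
  have hb1 : t / k ≤ 1 := (div_le_self ht0.le hk1).trans ht1.le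
  have ha0 : 0 ≤ 1 - t + t / k := by linarith
  have ha1 : 1 - t + t / k ≤ 1 := by
    have := div_le_self ht0.le hk1
    linarith
  exact add_nonneg (Real.negMulLog_nonneg ha0 ha1)
    (mul_nonneg (by linarith) (Real.negMulLog_nonneg hb0 hb1))

private lemma mix_mixPU (Φ : PartUnity X) {t : ℝ} (ht0 : 0 < t) (ht1 : t < 1) :
    Mix (mixPU Φ t ht0 ht1) Φ (entA Φ.n t) := by
  have hk : (0:ℝ) < Φ.n := by exact_mod_cast partUnity_n_pos Φ
  have hb : (0:ℝ) < t / Φ.n := div_pos ht0 hk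
  refine ⟨fun i j => t / Φ.n + (if i = j then (1 - t) else 0), ?_, ?_, ?_, ?_, ?_⟩
  · intro i j
    dsimp only
    split <;> linarith
  · intro i
    dsimp only [mixPU]
    rw [Finset.sum_add_distrib, Finset.sum_const, Finset.card_univ, Fintype.card_fin,
      nsmul_eq_mul]
    simp only [Finset.sum_ite_eq, Finset.mem_univ, if_true]
    field_simp; ring
  · intro j
    dsimp only [mixPU]
    rw [Finset.sum_add_distrib, Finset.sum_const, Finset.card_univ, Fintype.card_fin,
      nsmul_eq_mul]
    simp only [Finset.sum_ite_eq', Finset.mem_univ, if_true]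
    field_simp; ring
  · intro j
    dsimp only [mixPU]
    have hsplit : ∀ i : Fin Φ.n,
        (t / Φ.n + (if i = j then (1 - t) else 0)) *
          Real.log (t / Φ.n + (if i = j then (1 - t) else 0))
        = (t / Φ.n) * Real.log (t / Φ.n) +
          (if i = j then (1 - t + t / Φ.n) * Real.log (1 - t + t / Φ.n)
            - (t / Φ.n) * Real.log (t / Φ.n) else 0) := by
      intro i
      split
      · rw [show t / (Φ.n:ℝ) + (1 - t) = 1 - t + t / Φ.n from by ring]
        ring
      · ring
    simp only [hsplit]
    rw [Finset.sum_add_distrib, Finset.sum_const, Finset.card_univ, Fintype.card_fin,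
      nsmul_eq_mul]
    simp only [Finset.sum_ite_eq', Finset.mem_univ, if_true]
    refine le_of_eq ?_
    simp only [entA, Real.negMulLog]
    ring
  · intro i x
    dsimp only [mixPU]
    simp only [add_mul, ite_mul, zero_mul]
    rw [Finset.sum_add_distrib, ← Finset.mul_sum, Φ.sum_one x]
    simp only [Finset.sum_ite_eq, Finset.mem_univ, if_true]
    show (1 - t) * Φ.f i x + t / Φ.n = _
    ring

private lemma exists_small_t (k : ℕ) {ε : ℝ} (hε : 0 < ε) :
    ∃ t : ℝ, 0 < t ∧ t < 1 ∧ entA k t < ε := by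
  have hc : Continuous fun t : ℝ => entA k t := by
    unfold entA
    exact (Real.continuous_negMulLog.comp (by continuity)).add
      (continuous_const.mul (Real.continuous_negMulLog.comp (by continuity)))
  have h0 : entA k 0 = 0 := by simp [entA]
  have htend : Filter.Tendsto (fun t : ℝ => entA k t) (nhds 0) (nhds 0) := by
    have := hc.tendsto 0
    rwa [h0] at this
  have hev : ∀ᶠ t in nhds (0:ℝ), entA k t < ε := htend.eventually_lt_const hε
  rw [Metric.eventually_nhds_iff] at hev
  obtain ⟨δ, hδ, hball⟩ := hev
  refine ⟨min (δ/2) (1/2), by positivity, lt_of_le_of_lt (min_le_right _ _) (by norm_num), ?_⟩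
  apply hball
  rw [Real.dist_eq, sub_zero, abs_of_pos (by positivity)]
  exact lt_of_le_of_lt (min_le_left _ _) (by linarith)

end Construction
/-- `h̃_μ(T)` equals the supremum of `h̃_μ(T,Φ)` over *positive*
continuous partitions of unity. -/
theorem metEnt_eq_iSup_pos {X : Type*} [MetricSpace X] [CompactSpace X] [Nonempty X]
    [MeasurableSpace X] [BorelSpace X]
    (T : X → X) (hT : Continuous T) (hTsurj : Function.Surjective T)
    (μ : Measure X) [IsProbabilityMeasure μ] (hμ : MeasurePreserving T μ μ) :
    metEnt T μ =
      ⨆ Φ : {Φ : PartUnity X // Φ.Cont ∧ Φ.Pos}, ((locEnt T μ Φ.1 : ℝ) : EReal) := by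
  apply le_antisymm
  · show (⨆ Φ : {Φ : PartUnity X // Φ.Cont}, ((locEnt T μ Φ.1 : ℝ) : EReal)) ≤ _
    refine iSup_le ?_
    rintro ⟨Φ, hΦ⟩
    by_contra hcon
    push_neg at hcon
    obtain ⟨r, hr1, hr2⟩ := EReal.lt_iff_exists_real_btwn.mp hcon
    have hrR : r < locEnt T μ Φ := by exact_mod_cast hr2
    obtain ⟨t, ht0, ht1, htε⟩ := exists_small_t Φ.n (show (0:ℝ) < locEnt T μ Φ - r by linarith)
    have hloc := locEnt_le_of_mix (μ := μ) hT hΦ (mixPU_cont hΦ t ht0 ht1)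
      (entA_nonneg Φ.n (partUnity_n_pos Φ) ht0 ht1) (mix_mixPU Φ ht0 ht1)
    have hr3 : r < locEnt T μ (mixPU Φ t ht0 ht1) := by linarith
    have hle : ((locEnt T μ (mixPU Φ t ht0 ht1) : ℝ) : EReal)
        ≤ ⨆ Ψ : {Ψ : PartUnity X // Ψ.Cont ∧ Ψ.Pos}, ((locEnt T μ Ψ.1 : ℝ) : EReal) :=
      le_iSup_of_le ⟨mixPU Φ t ht0 ht1, mixPU_cont hΦ t ht0 ht1, mixPU_pos Φ t ht0 ht1⟩ le_rfl
    have hr4 : (r : EReal) < ⨆ Ψ : {Ψ : PartUnity X // Ψ.Cont ∧ Ψ.Pos},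
        ((locEnt T μ Ψ.1 : ℝ) : EReal) :=
      lt_of_lt_of_le (by exact_mod_cast hr3) hle
    exact absurd hr1 (not_lt.mpr hr4.le)
  · refine iSup_le ?_
    rintro ⟨Φ, hC, hP⟩
    exact le_iSup_of_le (⟨Φ, hC⟩ : {Φ : PartUnity X // Φ.Cont}) le_rfl
end
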